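/- arXiv:2104.03464 — 7 statements merged into one kernel-verified Lean document; each statement's English description precedes it below -/
import Mathlib

section
/- Let M^{p+} = {β ∈ ℝ^p : 0 ≤ β_1 ≤ β_2 ≤ ... ≤ β_p} be the positive monotone cone and let v ∈ M^{p+} have l constant pieces of lengths p_1,...,p_l (summing to p). If the first constant piece of v consists of zeros, then the tangent cone of M^{p+} at v equals the Cartesian product M^{p_1 +} × M^{p_2} × ... × M^{p_l}, where M^q is the monotone cone {x ∈ ℝ^q : x_1 ≤ ... ≤ x_q} and M^{q+} its nonnegative version; otherwise (first piece strictly positive) the tangent cone equals M^{p_1} × M^{p_2} × ... × M^{p_l}. -/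
open Finset in
lemma cone_mem {p : ℕ} (v x : Fin p → ℝ)
    (hmono : ∀ i j : Fin p, i ≤ j → x i ≤ x j ∨ v i < v j)
    (hpos : ∀ i, x i < 0 → 0 < v i)
    (hvm : Monotone v) (hv0 : ∀ i, 0 ≤ v i) :
    ∃ t : ℝ, 0 ≤ t ∧ ∃ w : Fin p → ℝ,
      (Monotone w ∧ ∀ i, 0 ≤ w i) ∧ x = t • (w - v) := by
  classical
  set g : Fin p × Fin p → ℝ := fun q =>
    if x q.2 < x q.1 ∧ v q.1 < v q.2 then (v q.2 - v q.1) / (x q.1 - x q.2) else 1 with hg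
  set h : Fin p → ℝ := fun i => if x i < 0 then v i / (-x i) else 1 with hh
  set F : Finset ℝ := insert 1 (Finset.image g Finset.univ ∪ Finset.image h Finset.univ)
    with hF
  have hFne : F.Nonempty := ⟨1, Finset.mem_insert_self _ _⟩
  set ε : ℝ := F.min' hFne with hε
  have hεpos : 0 < ε := by
    rw [hε, Finset.lt_min'_iff]
    intro y hy
    rw [hF] at hy
    rcases Finset.mem_insert.mp hy with rfl | hy
    · norm_num
    rcases Finset.mem_union.mp hy with hy | hy
    · obtain ⟨q, _, rfl⟩ := Finset.mem_image.mp hy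
      rw [hg]
      by_cases hc : x q.2 < x q.1 ∧ v q.1 < v q.2
      · simp only [if_pos hc]
        exact div_pos (by linarith [hc.2]) (by linarith [hc.1])
      · simp [if_neg hc]
    · obtain ⟨i, _, rfl⟩ := Finset.mem_image.mp hy
      rw [hh]
      by_cases hc : x i < 0
      · simp only [if_pos hc]
        exact div_pos (hpos i hc) (by linarith)
      · simp [if_neg hc]
  have hεg : ∀ q : Fin p × Fin p, ε ≤ g q := fun q =>
    Finset.min'_le _ _ (by
      rw [hF]; exact Finset.mem_insert_of_mem (Finset.mem_union_left _
        (Finset.mem_image_of_mem _ (Finset.mem_univ q))))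
  have hεh : ∀ i : Fin p, ε ≤ h i := fun i =>
    Finset.min'_le _ _ (by
      rw [hF]; exact Finset.mem_insert_of_mem (Finset.mem_union_right _
        (Finset.mem_image_of_mem _ (Finset.mem_univ i))))
  refine ⟨ε⁻¹, by positivity, fun i => v i + ε * x i, ⟨?_, ?_⟩, ?_⟩
  · intro i j hij
    dsimp only
    rcases hmono i j hij with hx | hv
    · have := hvm hij
      nlinarith
    · by_cases hx : x i ≤ x j
      · nlinarith
      · push_neg at hx
        have := hεg (i, j)
        rw [hg] at this
        simp only at this
        rw [if_pos (show x j < x i ∧ v i < v j from ⟨hx, hv⟩),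
          le_div_iff₀ (by linarith)] at this
        nlinarith
  · intro i
    dsimp only
    by_cases hc : x i < 0
    · have := hεh i
      rw [hh] at this
      simp only at this
      rw [if_pos hc, le_div_iff₀ (by linarith)] at this
      nlinarith
    · push_neg at hc
      have := hv0 i
      nlinarith
  · funext i
    simp only [Pi.smul_apply, Pi.sub_apply, smul_eq_mul]
    field_simp
    ring

theorem stmt_3 {p l : ℕ} (hl : 0 < l)
    (b : Fin p → Fin l) (hb : Monotone b) (hbsurj : Function.Surjective b)
    (u : Fin l → ℝ) (hu : StrictMono u) (hu0 : 0 ≤ u ⟨0, hl⟩)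
    (v : Fin p → ℝ) (hv : v = fun i => u (b i)) :
    (u ⟨0, hl⟩ = 0 →
      {x : Fin p → ℝ | ∃ t : ℝ, 0 ≤ t ∧ ∃ w : Fin p → ℝ,
        (Monotone w ∧ ∀ i, 0 ≤ w i) ∧ x = t • (w - v)} =
      {x : Fin p → ℝ | (∀ i j : Fin p, b i = b j → i ≤ j → x i ≤ x j) ∧
        ∀ i, b i = ⟨0, hl⟩ → 0 ≤ x i}) ∧
    (u ⟨0, hl⟩ ≠ 0 →
      {x : Fin p → ℝ | ∃ t : ℝ, 0 ≤ t ∧ ∃ w : Fin p → ℝ,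
        (Monotone w ∧ ∀ i, 0 ≤ w i) ∧ x = t • (w - v)} =
      {x : Fin p → ℝ | ∀ i j : Fin p, b i = b j → i ≤ j → x i ≤ x j}) := by
  have hvm : Monotone v := by
    rw [hv]; exact hu.monotone.comp hb
  have hzero_le : ∀ k : Fin l, (⟨0, hl⟩ : Fin l) ≤ k := fun k => by
    simp [Fin.le_def]
  have hv0 : ∀ i, 0 ≤ v i := fun i => by
    rw [hv]; exact le_trans hu0 (hu.monotone (hzero_le (b i)))
  -- blockwise monotone from membership
  have hblock : ∀ x : Fin p → ℝ,
      (∃ t : ℝ, 0 ≤ t ∧ ∃ w : Fin p → ℝ,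
        (Monotone w ∧ ∀ i, 0 ≤ w i) ∧ x = t • (w - v)) →
      ∀ i j : Fin p, b i = b j → i ≤ j → x i ≤ x j := by
    rintro x ⟨t, ht, w, ⟨hwm, hw0⟩, rfl⟩ i j hbij hij
    simp only [Pi.smul_apply, Pi.sub_apply, smul_eq_mul, hv]
    rw [hbij]
    have := hwm hij
    nlinarith
  have hmono : ∀ x : Fin p → ℝ,
      (∀ i j : Fin p, b i = b j → i ≤ j → x i ≤ x j) →
      ∀ i j : Fin p, i ≤ j → x i ≤ x j ∨ v i < v j := by
    intro x hx i j hij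
    by_cases hbij : b i = b j
    · exact Or.inl (hx i j hbij hij)
    · refine Or.inr ?_
      rw [hv]
      exact hu (lt_of_le_of_ne (hb hij) hbij)
  constructor
  · intro h0
    ext x
    simp only [Set.mem_setOf_eq]
    constructor
    · rintro hx
      refine ⟨hblock x hx, ?_⟩
      obtain ⟨t, ht, w, ⟨hwm, hw0⟩, rfl⟩ := hx
      intro i hbi
      simp only [Pi.smul_apply, Pi.sub_apply, smul_eq_mul, hv, hbi, h0]
      have := hw0 i
      nlinarith
    · rintro ⟨hx1, hx2⟩
      refine cone_mem v x (hmono x hx1) ?_ hvm hv0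
      intro i hxi
      by_cases hbi : b i = ⟨0, hl⟩
      · exact absurd (hx2 i hbi) (by linarith)
      · rw [hv]
        calc (0:ℝ) = u ⟨0, hl⟩ := h0.symm
        _ < u (b i) := hu (lt_of_le_of_ne (hzero_le (b i)) (Ne.symm hbi))
  · intro h0
    have hu0' : 0 < u ⟨0, hl⟩ := lt_of_le_of_ne hu0 (Ne.symm h0)
    ext x
    simp only [Set.mem_setOf_eq]
    constructor
    · exact hblock x
    · intro hx1
      refine cone_mem v x (hmono x hx1) ?_ hvm hv0
      intro i _
      rw [hv]
      exact lt_of_lt_of_le hu0' (hu.monotone (hzero_le (b i)))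
end

section
/- Let K = {β ∈ ℝ^p : β_i ≥ 0 for all i} be the non-negative orthant and v ∈ K. Then the Gaussian width w(T_K(v) ∩ S^{p-1}) = E sup_{u ∈ T_K(v) ∩ S^{p-1}} ⟨g, u⟩ (with g ~ N(0, I_p)) satisfies w(T_K(v) ∩ S^{p-1}) ≤ sqrt(p − |{i : v_i = 0}|/2). -/
set_option maxHeartbeats 1000000

open MeasureTheory ProbabilityTheory Real Filter
open scoped ENNReal NNReal

namespace Stmt4Aux



section OneDim

lemma sqrt_le_one_add (x : ℝ) (hx : 0 ≤ x) : Real.sqrt x ≤ 1 + x := by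
  have hs : Real.sqrt x ^ 2 = x := Real.sq_sqrt hx
  nlinarith [Real.sqrt_nonneg x, sq_nonneg (Real.sqrt x - 1)]

lemma integrable_exp_ker : Integrable (fun x : ℝ => Real.exp (-x^2/2)) := by
  have h := integrable_exp_neg_mul_sq (b := (1/2 : ℝ)) (by norm_num)
  refine h.congr (Filter.Eventually.of_forall fun x => ?_)
  show Real.exp (-(1/2) * x ^ 2) = Real.exp (-x^2/2)
  congr 1; ring

lemma integrable_sq_exp_ker : Integrable (fun x : ℝ => x^2 * Real.exp (-x^2/2)) := by
  have h := integrable_rpow_mul_exp_neg_mul_sq (b := (1/2 : ℝ)) (by norm_num) (s := 2) (by norm_num)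
  refine h.congr (Filter.Eventually.of_forall fun x => ?_)
  have h2 : x ^ (2:ℝ) = x ^ (2:ℕ) := by
    rw [show (2:ℝ) = ((2:ℕ):ℝ) by norm_num, Real.rpow_natCast]
  show x ^ (2:ℝ) * Real.exp (-(1/2) * x ^ 2) = x ^ 2 * Real.exp (-x^2/2)
  rw [h2]
  congr 1
  congr 1; ring

lemma tendsto_mul_exp_ker_atTop : Tendsto (fun x : ℝ => x * Real.exp (-x^2/2)) atTop (nhds 0) := by
  have h1 : Tendsto (fun x : ℝ => x ^ 1 * Real.exp (-x)) atTop (nhds 0) :=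
    tendsto_pow_mul_exp_neg_atTop_nhds_zero 1
  refine squeeze_zero' ?_ ?_ (by simpa using h1)
  · filter_upwards [eventually_ge_atTop (0:ℝ)] with x hx
    positivity
  · filter_upwards [eventually_ge_atTop (2:ℝ)] with x hx
    have hx0 : (0:ℝ) ≤ x := by linarith
    have : -x^2/2 ≤ -x := by nlinarith
    simpa using mul_le_mul_of_nonneg_left (Real.exp_le_exp.mpr this) hx0

lemma key_ftc : ∫ x : ℝ, (x^2 * Real.exp (-x^2/2) - Real.exp (-x^2/2)) = 0 := by
  have hderiv : ∀ x : ℝ, HasDerivAt (fun x : ℝ => -x * Real.exp (-x^2/2))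
      (x^2 * Real.exp (-x^2/2) - Real.exp (-x^2/2)) x := by
    intro x
    have h1 : HasDerivAt (fun x : ℝ => -x^2/2) (-x) x := by
      have := ((hasDerivAt_pow 2 x).neg).div_const 2
      refine this.congr_deriv ?_
      simp; ring
    have h2 : HasDerivAt (fun x : ℝ => Real.exp (-x^2/2)) (Real.exp (-x^2/2) * (-x)) x := h1.exp
    have h3 := ((hasDerivAt_id x).neg).mul h2
    refine h3.congr_deriv ?_
    simp; ring
  have hint : Integrable (fun x : ℝ => x^2 * Real.exp (-x^2/2) - Real.exp (-x^2/2)) :=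
    integrable_sq_exp_ker.sub integrable_exp_ker
  have htop : Tendsto (fun x : ℝ => -x * Real.exp (-x^2/2)) atTop (nhds 0) := by
    have := tendsto_mul_exp_ker_atTop.neg
    simpa using this
  have hbot : Tendsto (fun x : ℝ => -x * Real.exp (-x^2/2)) atBot (nhds 0) := by
    have := tendsto_mul_exp_ker_atTop.comp tendsto_neg_atBot_atTop
    simp only [Function.comp_def] at this
    simpa [neg_sq] using this
  have := MeasureTheory.integral_of_hasDerivAt_of_tendsto hderiv hint hbot htop
  simpa using this

lemma integral_exp_ker : ∫ x : ℝ, Real.exp (-x^2/2) = Real.sqrt (2 * π) := by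
  have h := integral_gaussian (1/2)
  rw [show π / (1/2 : ℝ) = 2 * π by ring] at h
  rw [← h]
  congr 1 with x
  congr 1; ring

lemma integral_sq_exp_ker : ∫ x : ℝ, x^2 * Real.exp (-x^2/2) = Real.sqrt (2 * π) := by
  have h := key_ftc
  rw [integral_sub integrable_sq_exp_ker integrable_exp_ker, sub_eq_zero] at h
  rw [h, integral_exp_ker]

end OneDim


section GaussMeasure

lemma pdf_eq (x : ℝ) :
    gaussianPDFReal 0 1 x = (Real.sqrt (2*π))⁻¹ * Real.exp (-x^2/2) := by
  simp [gaussianPDFReal]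

lemma gauss_eq_withDensity :
    gaussianReal 0 1
      = volume.withDensity (fun x => ((Real.toNNReal (gaussianPDFReal 0 1 x) : ℝ≥0) : ℝ≥0∞)) := by
  rw [gaussianReal_of_var_ne_zero 0 one_ne_zero]
  rfl

lemma integral_gauss_eq (f : ℝ → ℝ) :
    ∫ x, f x ∂(gaussianReal 0 1) = ∫ x, gaussianPDFReal 0 1 x * f x := by
  rw [gauss_eq_withDensity,
    integral_withDensity_eq_integral_smul (measurable_gaussianPDFReal 0 1).real_toNNReal]
  congr 1 with x
  rw [NNReal.smul_def, smul_eq_mul, Real.coe_toNNReal _ (gaussianPDFReal_nonneg 0 1 x)]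

lemma integrable_gauss_iff (f : ℝ → ℝ) :
    Integrable f (gaussianReal 0 1)
      ↔ Integrable (fun x => f x * gaussianPDFReal 0 1 x) volume := by
  rw [gauss_eq_withDensity, integrable_withDensity_iff
    ((measurable_gaussianPDFReal 0 1).real_toNNReal.coe_nnreal_ennreal)
    (Filter.Eventually.of_forall fun x => ENNReal.coe_lt_top)]
  apply integrable_congr
  refine Filter.Eventually.of_forall fun x => ?_
  simp [Real.coe_toNNReal _ (gaussianPDFReal_nonneg 0 1 x)]

lemma integrable_sq_gauss : Integrable (fun x : ℝ => x^2) (gaussianReal 0 1) := by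
  rw [integrable_gauss_iff]
  have h := integrable_sq_exp_ker.const_mul ((Real.sqrt (2*π))⁻¹)
  refine h.congr (Filter.Eventually.of_forall fun x => ?_)
  show (Real.sqrt (2*π))⁻¹ * (x ^ 2 * Real.exp (-x ^ 2 / 2)) = x ^ 2 * gaussianPDFReal 0 1 x
  rw [pdf_eq]; ring

lemma moment_sq : ∫ x, x^2 ∂(gaussianReal 0 1) = 1 := by
  rw [integral_gauss_eq]
  have : ∀ x : ℝ, gaussianPDFReal 0 1 x * x ^ 2
      = (Real.sqrt (2*π))⁻¹ * (x^2 * Real.exp (-x^2/2)) := by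
    intro x; rw [pdf_eq]; ring
  simp_rw [this]
  rw [integral_const_mul, integral_sq_exp_ker]
  rw [inv_mul_cancel₀]
  positivity

lemma integrable_maxsq_gauss : Integrable (fun x : ℝ => max x 0 ^ 2) (gaussianReal 0 1) := by
  refine integrable_sq_gauss.mono' ?_ ?_
  · exact ((continuous_id.max continuous_const).pow 2).aestronglyMeasurable
  · refine Filter.Eventually.of_forall fun x => ?_
    rw [Real.norm_eq_abs, abs_of_nonneg (sq_nonneg _)]
    rcases le_total x 0 with h | h
    · rw [max_eq_right h]; simpa using sq_nonneg x
    · rw [max_eq_left h]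

lemma integrable_maxnegsq_gauss :
    Integrable (fun x : ℝ => max (-x) 0 ^ 2) (gaussianReal 0 1) := by
  refine integrable_sq_gauss.mono' ?_ ?_
  · exact ((continuous_neg.max continuous_const).pow 2).aestronglyMeasurable
  · refine Filter.Eventually.of_forall fun x => ?_
    rw [Real.norm_eq_abs, abs_of_nonneg (sq_nonneg _)]
    rcases le_total x 0 with h | h
    · rw [max_eq_left (by linarith : (0:ℝ) ≤ -x)]; rw [neg_sq]
    · rw [max_eq_right (by linarith : -x ≤ (0:ℝ))]; simpa using sq_nonneg x

lemma gauss_map_neg :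
    Measure.map (fun x : ℝ => -x) (gaussianReal 0 1) = gaussianReal 0 1 := by
  have h := gaussianReal_map_const_mul (μ := 0) (v := 1) (-1 : ℝ)
  have h1 : (⟨(-1:ℝ)^2, sq_nonneg _⟩ : ℝ≥0) = 1 := by ext; norm_num
  rw [show NNReal.mk ((-1:ℝ)^2) (sq_nonneg _) = 1 from h1] at h
  simp only [mul_zero, mul_one, one_mul] at h
  rw [← h]
  congr 1
  funext x
  simp

lemma moment_maxsq : ∫ x, max x 0 ^ 2 ∂(gaussianReal 0 1) = 1/2 := by
  have hneg : ∫ x, max (-x) 0 ^2 ∂(gaussianReal 0 1) = ∫ x, max x 0 ^2 ∂(gaussianReal 0 1) := by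
    conv_rhs => rw [← gauss_map_neg]
    have hmc : Continuous fun x : ℝ => max x 0 ^ 2 := by fun_prop
    rw [integral_map measurable_neg.aemeasurable hmc.aestronglyMeasurable]
  have hsum : ∀ x : ℝ, max x 0 ^ 2 + max (-x) 0 ^ 2 = x ^ 2 := by
    intro x
    rcases le_total x 0 with h | h
    · rw [max_eq_right h, max_eq_left (by linarith)]; simp [neg_sq]
    · rw [max_eq_left h, max_eq_right (by linarith)]; simp
  have h2 : ∫ x, (max x 0 ^ 2 + max (-x) 0 ^ 2) ∂(gaussianReal 0 1) = 1 := by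
    have : (fun x : ℝ => max x 0 ^ 2 + max (-x) 0 ^ 2) = fun x : ℝ => x ^ 2 := funext hsum
    rw [this, moment_sq]
  rw [integral_add integrable_maxsq_gauss integrable_maxnegsq_gauss, hneg] at h2
  linarith

end GaussMeasure

section PiEval

lemma map_eval {p : ℕ} (i : Fin p) :
    (Measure.pi fun _ : Fin p => gaussianReal 0 1).map (fun g => g i) = gaussianReal 0 1 := by
  apply Measure.ext
  intro s hs
  rw [Measure.map_apply (measurable_pi_apply i) hs]
  have hpre : (fun g : Fin p → ℝ => g i) ⁻¹' s
      = Set.pi Set.univ (Function.update (fun _ : Fin p => (Set.univ : Set ℝ)) i s) := by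
    ext g
    simp only [Set.mem_preimage, Set.mem_pi, Set.mem_univ, forall_true_left,
      Function.update_apply]
    constructor
    · intro h j
      split_ifs with hj
      · subst hj; exact h
      · trivial
    · intro h
      have := h i
      simpa using this
  rw [hpre, Measure.pi_pi]
  rw [Finset.prod_eq_single i
    (fun j _ hj => by rw [Function.update_of_ne hj]; simp)
    (fun h => absurd (Finset.mem_univ i) h)]
  rw [Function.update_self]

lemma integral_eval {p : ℕ} (i : Fin p) (f : ℝ → ℝ)
    (hf : AEStronglyMeasurable f (gaussianReal 0 1)) :
    ∫ g : Fin p → ℝ, f (g i) ∂(Measure.pi fun _ : Fin p => gaussianReal 0 1)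
      = ∫ x, f x ∂(gaussianReal 0 1) := by
  have h := map_eval (p := p) i
  conv_rhs => rw [← h]
  rw [integral_map (measurable_pi_apply i).aemeasurable (by rwa [h])]

lemma integrable_eval {p : ℕ} (i : Fin p) (f : ℝ → ℝ)
    (hf : AEStronglyMeasurable f (gaussianReal 0 1))
    (hint : Integrable f (gaussianReal 0 1)) :
    Integrable (fun g : Fin p → ℝ => f (g i))
      (Measure.pi fun _ : Fin p => gaussianReal 0 1) := by
  have h := map_eval (p := p) i
  exact (integrable_map_measure (by rwa [h]) (measurable_pi_apply i).aemeasurable).mp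
    (by rwa [h])

end PiEval

section SqrtJensen

lemma integral_sqrt_le {α : Type*} [MeasurableSpace α] (μ : Measure α) [IsProbabilityMeasure μ]
    (X : α → ℝ) (hX : Integrable X μ) (hX0 : ∀ a, 0 ≤ X a)
    (hs : Integrable (fun a => Real.sqrt (X a)) μ) :
    ∫ a, Real.sqrt (X a) ∂μ ≤ Real.sqrt (∫ a, X a ∂μ) := by
  set c := ∫ a, X a ∂μ with hc
  have hc0 : 0 ≤ c := integral_nonneg hX0
  rcases eq_or_lt_of_le hc0 with hc0' | hc0'
  · have hX00 : X =ᵐ[μ] 0 :=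
      (integral_eq_zero_iff_of_nonneg hX0 hX).mp hc0'.symm
    have : (fun a => Real.sqrt (X a)) =ᵐ[μ] 0 := by
      filter_upwards [hX00] with a ha
      simp [ha]
    rw [integral_congr_ae this]
    simp [Real.sqrt_nonneg]
  · have hsc : 0 < Real.sqrt c := Real.sqrt_pos.mpr hc0'
    have hptw : ∀ a, Real.sqrt (X a) ≤ (X a + c) / (2 * Real.sqrt c) := by
      intro a
      rw [le_div_iff₀ (by positivity)]
      nlinarith [sq_nonneg (Real.sqrt (X a) - Real.sqrt c), Real.sq_sqrt (hX0 a),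
        Real.sq_sqrt hc0, Real.sqrt_nonneg (X a), Real.sqrt_nonneg c]
    calc ∫ a, Real.sqrt (X a) ∂μ
        ≤ ∫ a, (X a + c) / (2 * Real.sqrt c) ∂μ :=
          integral_mono hs ((hX.add (integrable_const c)).div_const _) hptw
      _ = (c + c) / (2 * Real.sqrt c) := by
          rw [integral_div, integral_add hX (integrable_const c), integral_const,
            probReal_univ, one_smul]
      _ = Real.sqrt c := by
          rw [show c + c = 2 * c by ring, mul_div_mul_left _ _ (two_ne_zero)]
          exact Real.div_sqrt

end SqrtJensen

end Stmt4Aux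

open Stmt4Aux


theorem stmt_4 {p : ℕ} (v : Fin p → ℝ) (hv : ∀ i, 0 ≤ v i) :
    (∫ g : Fin p → ℝ,
        sSup ((fun u => ∑ i, g i * u i) ''
          ({x : Fin p → ℝ | ∀ i, v i = 0 → 0 ≤ x i} ∩ {x | ∑ i, (x i) ^ 2 = 1}))
        ∂(Measure.pi fun _ : Fin p => gaussianReal 0 1))
      ≤ Real.sqrt ((p : ℝ) - ({i : Fin p | v i = 0}.ncard : ℝ) / 2) := by
  classical
  set Pm : Measure (Fin p → ℝ) := Measure.pi fun _ : Fin p => gaussianReal 0 1 with hPi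
  set S : Set (Fin p → ℝ) :=
    {x : Fin p → ℝ | ∀ i, v i = 0 → 0 ≤ x i} ∩ {x | ∑ i, (x i) ^ 2 = 1} with hSdef
  by_cases hSe : S = ∅
  · rw [hSe]
    simp only [Set.image_empty, Real.sSup_empty, integral_zero]
    exact Real.sqrt_nonneg _
  obtain ⟨u₀, hu₀⟩ := Set.nonempty_iff_ne_empty.mpr hSe
  have hu₀1 : ∀ i, v i = 0 → 0 ≤ u₀ i := hu₀.1
  have hu₀2 : ∑ i, (u₀ i) ^ 2 = 1 := hu₀.2
  -- the truncation map
  set T : (Fin p → ℝ) → Fin p → ℝ := fun g i => if v i = 0 then max (g i) 0 else g i with hT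
  set h : (Fin p → ℝ) → ℝ := fun g => Real.sqrt (∑ i, (T g i) ^ 2) with hh
  set G : (Fin p → ℝ) → ℝ := fun g => Real.sqrt (∑ i, (g i) ^ 2) with hG
  set F : (Fin p → ℝ) → ℝ := fun g => sSup ((fun u => ∑ i, g i * u i) '' S) with hF
  -- upper bound on elements
  have hbd : ∀ g : Fin p → ℝ, ∀ y ∈ (fun u => ∑ i, g i * u i) '' S, y ≤ h g := by
    rintro g y ⟨u, huS, rfl⟩
    have hu1 : ∀ i, v i = 0 → 0 ≤ u i := huS.1
    have hu2 : ∑ i, (u i) ^ 2 = 1 := huS.2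
    calc ∑ i, g i * u i ≤ ∑ i, T g i * u i := by
          refine Finset.sum_le_sum fun i _ => ?_
          by_cases hvi : v i = 0
          · simp only [hT, if_pos hvi]
            exact mul_le_mul_of_nonneg_right (le_max_left _ _) (hu1 i hvi)
          · simp only [hT, if_neg hvi]
            exact le_rfl
      _ ≤ Real.sqrt (∑ i, (T g i) ^ 2) * Real.sqrt (∑ i, (u i) ^ 2) :=
          Real.sum_mul_le_sqrt_mul_sqrt _ _ _
      _ = h g := by rw [hu2, Real.sqrt_one, mul_one]
  have hBdd : ∀ g : Fin p → ℝ, BddAbove ((fun u => ∑ i, g i * u i) '' S) :=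
    fun g => ⟨h g, fun y hy => hbd g y hy⟩
  have hne : ∀ g : Fin p → ℝ, ((fun u => ∑ i, g i * u i) '' S).Nonempty :=
    fun g => ⟨_, Set.mem_image_of_mem _ hu₀⟩
  have hFh : ∀ g, F g ≤ h g := fun g => Real.sSup_le (hbd g) (Real.sqrt_nonneg _)
  -- h ≤ G
  have hTsq : ∀ (g : Fin p → ℝ) (i : Fin p), (T g i) ^ 2 ≤ (g i) ^ 2 := by
    intro g i
    by_cases hvi : v i = 0
    · simp only [hT, if_pos hvi]
      rcases le_total (g i) 0 with hgi | hgi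
      · rw [max_eq_right hgi]; simpa using sq_nonneg (g i)
      · rw [max_eq_left hgi]
    · simp only [hT, if_neg hvi]
      exact le_rfl
  have hhG : ∀ g, h g ≤ G g := fun g =>
    Real.sqrt_le_sqrt (Finset.sum_le_sum fun i _ => hTsq g i)
  -- lower bound on F
  have hlow : ∀ g, -G g ≤ F g := by
    intro g
    have hcs := Real.sum_mul_le_sqrt_mul_sqrt Finset.univ (fun i => -(g i)) u₀
    simp only [neg_sq, neg_mul] at hcs
    rw [Finset.sum_neg_distrib, hu₀2, Real.sqrt_one, mul_one] at hcs
    have h1 : -G g ≤ ∑ i, g i * u₀ i := by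
      rw [hG]; dsimp only; linarith
    exact h1.trans (le_csSup (hBdd g) (Set.mem_image_of_mem _ hu₀))
  -- Lipschitz estimate
  have habs : ∀ (u : Fin p → ℝ), u ∈ S → ∀ i, |u i| ≤ 1 := by
    intro u huS i
    have h1 : (u i) ^ 2 ≤ 1 := by
      rw [← huS.2]
      exact Finset.single_le_sum (f := fun j => (u j) ^ 2) (fun j _ => sq_nonneg _)
        (Finset.mem_univ i)
    rw [← Real.sqrt_one, ← Real.sqrt_sq_eq_abs]
    exact Real.sqrt_le_sqrt h1
  have hlip : ∀ g₁ g₂ : Fin p → ℝ, F g₁ ≤ F g₂ + (p : ℝ) * dist g₁ g₂ := by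
    intro g₁ g₂
    refine csSup_le (hne g₁) ?_
    rintro y ⟨u, huS, rfl⟩
    have h1 : ∑ i, g₂ i * u i ≤ F g₂ := le_csSup (hBdd g₂) (Set.mem_image_of_mem _ huS)
    have h2 : ∑ i, (g₁ i - g₂ i) * u i ≤ (p : ℝ) * dist g₁ g₂ := by
      calc ∑ i, (g₁ i - g₂ i) * u i ≤ ∑ i, dist g₁ g₂ := by
            refine Finset.sum_le_sum fun i _ => ?_
            calc (g₁ i - g₂ i) * u i ≤ |(g₁ i - g₂ i) * u i| := le_abs_self _
              _ = |g₁ i - g₂ i| * |u i| := abs_mul _ _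
              _ ≤ dist g₁ g₂ * 1 := by
                  refine mul_le_mul ?_ (habs u huS i) (abs_nonneg _) dist_nonneg
                  rw [← Real.dist_eq]
                  exact dist_le_pi_dist g₁ g₂ i
              _ = dist g₁ g₂ := mul_one _
        _ = (p : ℝ) * dist g₁ g₂ := by
            rw [Finset.sum_const, Finset.card_univ, Fintype.card_fin, nsmul_eq_mul]
    have h3 : ∑ i, g₁ i * u i = ∑ i, g₂ i * u i + ∑ i, (g₁ i - g₂ i) * u i := by
      rw [← Finset.sum_add_distrib]
      congr 1 with i
      ring
    dsimp only
    rw [h3]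
    exact add_le_add h1 h2
  have hFcont : Continuous F := by
    have : LipschitzWith (p : ℝ≥0) F := by
      refine LipschitzWith.of_dist_le_mul fun g₁ g₂ => ?_
      rw [Real.dist_eq, abs_sub_le_iff]
      have hc : ((p : ℝ≥0) : ℝ) = (p : ℝ) := by simp
      rw [hc]
      constructor
      · linarith [hlip g₁ g₂]
      · rw [dist_comm g₁ g₂]; linarith [hlip g₂ g₁]
    exact this.continuous
  -- integrability
  have hTcont : ∀ i, Continuous fun g : Fin p → ℝ => T g i := by
    intro i
    simp only [hT]
    split_ifs with hvi
    · exact (continuous_apply i).max continuous_const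
    · exact continuous_apply i
  have hhcont : Continuous h := by
    refine Real.continuous_sqrt.comp ?_
    exact continuous_finset_sum _ fun i _ => (hTcont i).pow 2
  have hGcont : Continuous G := by
    refine Real.continuous_sqrt.comp ?_
    exact continuous_finset_sum _ fun i _ => (continuous_apply i).pow 2
  have hintsq : ∀ i : Fin p, Integrable (fun g : Fin p → ℝ => (g i) ^ 2) Pm := by
    intro i
    exact integrable_eval i (fun x => x ^ 2) (continuous_pow 2).aestronglyMeasurable
      integrable_sq_gauss
  have hintB : Integrable (fun g : Fin p → ℝ => 1 + ∑ i, (g i) ^ 2) Pm :=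
    (integrable_const 1).add (integrable_finset_sum _ fun i _ => hintsq i)
  have hsum_nonneg : ∀ g : Fin p → ℝ, 0 ≤ ∑ i, (g i) ^ 2 :=
    fun g => Finset.sum_nonneg fun i _ => sq_nonneg _
  have hintG : Integrable G Pm := by
    refine hintB.mono' hGcont.aestronglyMeasurable (Eventually.of_forall fun g => ?_)
    rw [Real.norm_eq_abs, abs_of_nonneg (Real.sqrt_nonneg _)]
    exact sqrt_le_one_add _ (hsum_nonneg g)
  have hintF : Integrable F Pm := by
    refine hintG.mono' hFcont.aestronglyMeasurable (Eventually.of_forall fun g => ?_)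
    rw [Real.norm_eq_abs, abs_le]
    exact ⟨hlow g, (hFh g).trans (hhG g)⟩
  have hinth : Integrable h Pm := by
    refine hintG.mono' hhcont.aestronglyMeasurable (Eventually.of_forall fun g => ?_)
    rw [Real.norm_eq_abs, abs_of_nonneg (Real.sqrt_nonneg _)]
    exact hhG g
  have hintTi : ∀ i : Fin p, Integrable (fun g : Fin p → ℝ => (T g i) ^ 2) Pm := by
    intro i
    by_cases hvi : v i = 0
    · simp only [hT, if_pos hvi]
      exact integrable_eval i (fun x => max x 0 ^ 2)
        (by continuity : Continuous fun x : ℝ => max x 0 ^ 2).aestronglyMeasurable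
        integrable_maxsq_gauss
    · simp only [hT, if_neg hvi]
      exact hintsq i
  have hintH : Integrable (fun g : Fin p → ℝ => ∑ i, (T g i) ^ 2) Pm :=
    integrable_finset_sum _ fun i _ => hintTi i
  -- value of ∫ H
  have hHval : ∫ g, (∑ i, (T g i) ^ 2) ∂Pm
      = (p : ℝ) - (({i : Fin p | v i = 0}.ncard : ℝ)) / 2 := by
    rw [integral_finset_sum _ fun i _ => hintTi i]
    have hterm : ∀ i : Fin p, ∫ g, (T g i) ^ 2 ∂Pm = if v i = 0 then (1:ℝ)/2 else 1 := by
      intro i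
      by_cases hvi : v i = 0
      · rw [if_pos hvi]
        simp only [hT, if_pos hvi]
        rw [integral_eval i (fun x => max x 0 ^ 2)
          (by continuity : Continuous fun x : ℝ => max x 0 ^ 2).aestronglyMeasurable]
        exact moment_maxsq
      · rw [if_neg hvi]
        simp only [hT, if_neg hvi]
        rw [integral_eval i (fun x => x ^ 2) (continuous_pow 2).aestronglyMeasurable]
        exact moment_sq
    simp_rw [hterm]
    have hk : ({i : Fin p | v i = 0}.ncard : ℝ)
        = ((Finset.univ.filter (fun i : Fin p => v i = 0)).card : ℝ) := by
      congr 1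
      rw [Set.ncard_eq_toFinset_card']
      congr 1
      ext i
      simp
    rw [hk, Finset.sum_ite, Finset.sum_const, Finset.sum_const]
    have hcards := Finset.card_filter_add_card_filter_not
      (s := (Finset.univ : Finset (Fin p))) (fun i : Fin p => v i = 0)
    rw [Finset.card_univ, Fintype.card_fin] at hcards
    have : ((Finset.univ.filter (fun i : Fin p => ¬ v i = 0)).card : ℝ)
        = (p : ℝ) - ((Finset.univ.filter (fun i : Fin p => v i = 0)).card : ℝ) := by
      have := hcards
      push_cast [← this]
      ring
    rw [nsmul_eq_mul, nsmul_eq_mul, this]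
    ring
  -- final chain
  calc (∫ g, F g ∂Pm) ≤ ∫ g, h g ∂Pm := integral_mono hintF hinth hFh
    _ ≤ Real.sqrt (∫ g, (∑ i, (T g i) ^ 2) ∂Pm) := by
        refine integral_sqrt_le Pm _ hintH (fun g => ?_) hinth
        exact Finset.sum_nonneg fun i _ => sq_nonneg _
    _ = Real.sqrt ((p : ℝ) - (({i : Fin p | v i = 0}.ncard : ℝ)) / 2) := by rw [hHval]
end

section
/- Fix β̂ ∈ ℝ^p, an integer s^u ∈ [1,p], and R > 0 with R² ≥ Σ_{i > s^u} β̂_{#i}², where |β̂_{#1}| ≥ ... ≥ |β̂_{#p}| are the coordinates ordered by magnitude. Then the maximum of ‖v‖_1 over vectors v with ‖v − β̂‖ ≤ R and ‖v‖_0 ≤ s^u is achieved by the vector that keeps the s^u largest-magnitude coordinates of β̂, adds sign(β̂_{#i})·c to each of them with c = sqrt((R² − Σ_{i > s^u} β̂_{#i}²)/s^u), and sets the remaining coordinates to zero. -/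
/-- If `S` contains the largest values of a nonnegative function `f` and
`W` has at most as many elements, then the sum of `f` over `W` is at most
the sum over `S`. -/
lemma aux_sum_le_stmt8 {p : ℕ} (S W : Finset (Fin p)) (f : Fin p → ℝ)
    (hf : ∀ i, 0 ≤ f i) (hcard : W.card ≤ S.card)
    (hmono : ∀ i ∈ S, ∀ j ∉ S, f j ≤ f i) :
    ∑ i ∈ W, f i ≤ ∑ i ∈ S, f i := by
  have hc : (W \ S).card ≤ (S \ W).card := by
    have h1 : (W \ S).card + (W ∩ S).card = W.card := Finset.card_sdiff_add_card_inter W S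
    have h2 : (S \ W).card + (S ∩ W).card = S.card := Finset.card_sdiff_add_card_inter S W
    rw [Finset.inter_comm] at h2
    omega
  have key : ∑ i ∈ W \ S, f i ≤ ∑ i ∈ S \ W, f i := by
    rcases (S \ W).eq_empty_or_nonempty with h | h
    · have : W \ S = ∅ := by
        rw [h] at hc
        exact Finset.card_eq_zero.mp (Nat.le_zero.mp (by simpa using hc))
      rw [this, h]
    · obtain ⟨i0, hi0, hμ⟩ := Finset.exists_mem_eq_inf' h f
      have hi0S : i0 ∈ S := (Finset.mem_sdiff.mp hi0).1
      have hμ0 : 0 ≤ (S \ W).inf' h f := hμ ▸ hf i0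
      calc ∑ i ∈ W \ S, f i ≤ (W \ S).card • ((S \ W).inf' h f) := by
            refine Finset.sum_le_card_nsmul _ _ _ (fun x hx => ?_)
            rw [hμ]
            exact hmono i0 hi0S x (Finset.mem_sdiff.mp hx).2
        _ ≤ (S \ W).card • ((S \ W).inf' h f) := by
            exact nsmul_le_nsmul_left hμ0 hc
        _ ≤ ∑ i ∈ S \ W, f i :=
            Finset.card_nsmul_le_sum _ _ _ (fun x hx => Finset.inf'_le f hx)
  have hW : ∑ i ∈ W ∩ S, f i + ∑ i ∈ W \ S, f i = ∑ i ∈ W, f i :=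
    Finset.sum_inter_add_sum_sdiff W S f
  have hS : ∑ i ∈ S ∩ W, f i + ∑ i ∈ S \ W, f i = ∑ i ∈ S, f i :=
    Finset.sum_inter_add_sum_sdiff S W f
  rw [Finset.inter_comm] at hS
  linarith

theorem stmt_8 {p : ℕ} (b : Fin p → ℝ) (su : ℕ) (hsu1 : 1 ≤ su) (hsup : su ≤ p)
    (R : ℝ) (hR : 0 < R)
    (S : Finset (Fin p)) (hScard : S.card = su)
    (hStop : ∀ i ∈ S, ∀ j ∉ S, |b j| ≤ |b i|)
    (hR2 : ∑ i ∈ Sᶜ, (b i) ^ 2 ≤ R ^ 2)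
    (c : ℝ) (hc : c = Real.sqrt ((R ^ 2 - ∑ i ∈ Sᶜ, (b i) ^ 2) / su))
    (v : Fin p → ℝ)
    (hv : ∀ i, v i = if i ∈ S then b i + (if b i < 0 then -1 else 1) * c else 0) :
    (Real.sqrt (∑ i, (v i - b i) ^ 2) ≤ R ∧ {i | v i ≠ 0}.ncard ≤ su) ∧
    ∀ w : Fin p → ℝ, Real.sqrt (∑ i, (w i - b i) ^ 2) ≤ R →
      {i | w i ≠ 0}.ncard ≤ su → ∑ i, |w i| ≤ ∑ i, |v i| := by
  set T : ℝ := ∑ i ∈ Sᶜ, (b i) ^ 2 with hT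
  have hsupos : (0 : ℝ) < (su : ℝ) := by positivity
  have hT0 : 0 ≤ T := Finset.sum_nonneg fun i _ => sq_nonneg _
  have hRT : 0 ≤ R ^ 2 - T := by linarith
  have hc0 : 0 ≤ c := hc ▸ Real.sqrt_nonneg _
  have hc2 : c ^ 2 = (R ^ 2 - T) / su := by
    rw [hc, Real.sq_sqrt (by positivity)]
  -- |v i| = |b i| + c on S
  have hvabs : ∀ i ∈ S, |v i| = |b i| + c := by
    intro i hi
    rw [hv i, if_pos hi]
    by_cases hb : b i < 0
    · rw [if_pos hb, abs_of_neg hb, abs_of_nonpos (by linarith)]; ring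
    · rw [if_neg hb, abs_of_nonneg (by push_neg at hb; linarith), abs_of_nonneg (by push_neg at hb; linarith)]; ring
  have hv0 : ∀ i ∉ S, v i = 0 := fun i hi => by rw [hv i, if_neg hi]
  -- (v i - b i)^2 = c^2 on S
  have hvd : ∀ i ∈ S, (v i - b i) ^ 2 = c ^ 2 := by
    intro i hi
    rw [hv i, if_pos hi]
    by_cases hb : b i < 0
    · rw [if_pos hb]; ring
    · rw [if_neg hb]; ring
  have hsum_vd : ∑ i, (v i - b i) ^ 2 = R ^ 2 := by
    rw [← Finset.sum_add_sum_compl S]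
    have h1 : ∑ i ∈ S, (v i - b i) ^ 2 = (su : ℝ) * c ^ 2 := by
      rw [Finset.sum_congr rfl hvd, Finset.sum_const, hScard, nsmul_eq_mul]
    have h2 : ∑ i ∈ Sᶜ, (v i - b i) ^ 2 = T := by
      refine Finset.sum_congr rfl fun i hi => ?_
      rw [hv0 i (Finset.mem_compl.mp hi)]; ring
    rw [h1, h2, hc2]
    field_simp
    ring
  have hsuc : (su : ℝ) * c = Real.sqrt su * Real.sqrt (R ^ 2 - T) := by
    rw [hc, ← Real.sqrt_mul (by positivity), ← Real.sqrt_sq hsupos.le,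
      ← Real.sqrt_mul (by positivity)]
    congr 1
    field_simp
    rw [Real.sqrt_sq hsupos.le]
    ring
  have hsumv : ∑ i, |v i| = ∑ i ∈ S, |b i| + Real.sqrt su * Real.sqrt (R ^ 2 - T) := by
    rw [← Finset.sum_add_sum_compl S]
    have h2 : ∑ i ∈ Sᶜ, |v i| = 0 := by
      refine Finset.sum_eq_zero fun i hi => ?_
      rw [hv0 i (Finset.mem_compl.mp hi), abs_zero]
    rw [h2, add_zero, Finset.sum_congr rfl hvabs, Finset.sum_add_distrib,
      Finset.sum_const, hScard, nsmul_eq_mul, hsuc]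
  constructor
  · constructor
    · rw [hsum_vd, Real.sqrt_sq hR.le]
    · have hsub : {i | v i ≠ 0} ⊆ ↑S := by
        intro i hi
        by_contra hiS
        exact hi (hv0 i hiS)
      calc {i | v i ≠ 0}.ncard ≤ (↑S : Set (Fin p)).ncard :=
            Set.ncard_le_ncard hsub (S.finite_toSet)
        _ = su := by rw [Set.ncard_coe_finset, hScard]
  · intro w hw1 hw2
    set W : Finset (Fin p) := Finset.univ.filter (fun i => w i ≠ 0) with hWdef
    have hWset : {i | w i ≠ 0} = ↑W := by ext i; simp [hWdef]
    have hWcard : W.card ≤ su := by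
      rw [hWset, Set.ncard_coe_finset] at hw2; exact hw2
    have hw0 : ∀ i ∉ W, w i = 0 := by
      intro i hi
      by_contra h
      exact hi (Finset.mem_filter.mpr ⟨Finset.mem_univ i, h⟩)
    have hsum_w : ∑ i, (w i - b i) ^ 2 ≤ R ^ 2 := by
      have h0 : 0 ≤ ∑ i, (w i - b i) ^ 2 := Finset.sum_nonneg fun i _ => sq_nonneg _
      calc ∑ i, (w i - b i) ^ 2 = Real.sqrt (∑ i, (w i - b i) ^ 2) ^ 2 :=
            (Real.sq_sqrt h0).symm
        _ ≤ R ^ 2 := pow_le_pow_left₀ (Real.sqrt_nonneg _) hw1 2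
    have hWc : ∑ i ∈ Wᶜ, (w i - b i) ^ 2 = ∑ i ∈ Wᶜ, (b i) ^ 2 := by
      refine Finset.sum_congr rfl fun i hi => ?_
      rw [hw0 i (Finset.mem_compl.mp hi)]; ring
    have hWsum : ∑ i ∈ W, (w i - b i) ^ 2 ≤ R ^ 2 - ∑ i ∈ Wᶜ, (b i) ^ 2 := by
      have := Finset.sum_add_sum_compl W (fun i => (w i - b i) ^ 2)
      rw [hWc] at this
      linarith
    -- compare complements of squared sums
    have hsq_mono : ∑ i ∈ W, (b i) ^ 2 ≤ ∑ i ∈ S, (b i) ^ 2 := by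
      refine aux_sum_le_stmt8 S W _ (fun i => sq_nonneg _) (by omega) ?_
      intro i hi j hj
      have := hStop i hi j hj
      calc (b j) ^ 2 = |b j| ^ 2 := (sq_abs _).symm
        _ ≤ |b i| ^ 2 := pow_le_pow_left₀ (abs_nonneg _) this 2
        _ = (b i) ^ 2 := sq_abs _
    have hcompl : T ≤ ∑ i ∈ Wᶜ, (b i) ^ 2 := by
      have h1 := Finset.sum_add_sum_compl W (fun i => (b i) ^ 2)
      have h2 := Finset.sum_add_sum_compl S (fun i => (b i) ^ 2)
      rw [hT]
      linarith
    have habs_mono : ∑ i ∈ W, |b i| ≤ ∑ i ∈ S, |b i| :=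
      aux_sum_le_stmt8 S W _ (fun i => abs_nonneg _) (by omega) hStop
    -- Cauchy–Schwarz
    have hCS : ∑ i ∈ W, |w i - b i| ≤ Real.sqrt su * Real.sqrt (R ^ 2 - T) := by
      have h1 : (∑ i ∈ W, |w i - b i|) ^ 2 ≤ (W.card : ℝ) * ∑ i ∈ W, (w i - b i) ^ 2 := by
        have := sq_sum_le_card_mul_sum_sq (s := W) (f := fun i => |w i - b i|)
        simpa [sq_abs] using this
      have h2 : (∑ i ∈ W, |w i - b i|) ^ 2 ≤ (su : ℝ) * (R ^ 2 - T) := by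
        calc (∑ i ∈ W, |w i - b i|) ^ 2 ≤ (W.card : ℝ) * ∑ i ∈ W, (w i - b i) ^ 2 := h1
          _ ≤ (su : ℝ) * (R ^ 2 - T) := by
              apply mul_le_mul
              · exact_mod_cast hWcard
              · linarith
              · exact Finset.sum_nonneg fun i _ => sq_nonneg _
              · positivity
      have h3 : 0 ≤ ∑ i ∈ W, |w i - b i| := Finset.sum_nonneg fun i _ => abs_nonneg _
      calc ∑ i ∈ W, |w i - b i| = Real.sqrt ((∑ i ∈ W, |w i - b i|) ^ 2) :=
            (Real.sqrt_sq h3).symm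
        _ ≤ Real.sqrt ((su : ℝ) * (R ^ 2 - T)) := Real.sqrt_le_sqrt h2
        _ = Real.sqrt su * Real.sqrt (R ^ 2 - T) := Real.sqrt_mul (by positivity) _
    have hwW : ∑ i, |w i| = ∑ i ∈ W, |w i| := by
      rw [← Finset.sum_add_sum_compl W]
      have : ∑ i ∈ Wᶜ, |w i| = 0 := by
        refine Finset.sum_eq_zero fun i hi => ?_
        rw [hw0 i (Finset.mem_compl.mp hi), abs_zero]
      rw [this, add_zero]
    calc ∑ i, |w i| = ∑ i ∈ W, |w i| := hwW
      _ ≤ ∑ i ∈ W, (|b i| + |w i - b i|) := by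
          refine Finset.sum_le_sum fun i _ => ?_
          calc |w i| = |b i + (w i - b i)| := by ring_nf
            _ ≤ |b i| + |w i - b i| := abs_add_le _ _
      _ = ∑ i ∈ W, |b i| + ∑ i ∈ W, |w i - b i| := Finset.sum_add_distrib
      _ ≤ ∑ i ∈ S, |b i| + Real.sqrt su * Real.sqrt (R ^ 2 - T) := by
          exact add_le_add habs_mono hCS
      _ = ∑ i, |v i| := hsumv.symm
end

section
/- Let f, ψ : ℝ^p → ℝ be convex with bounded subgradients ‖g‖ ≤ C₂ on the relevant region, suppose the feasible set Q = {η : ψ(η) ≤ 0} admits a strictly feasible point η^{sf} with ψ(η^{sf}) < 0, and let η* minimize f over Q. Run constrained subgradient descent η_{n+1} = η_n − h_n g_n, where g_n is a subgradient of f at η_n if η_n ∈ Q and a subgradient of ψ at η_n otherwise, starting from η₁ with ‖η₁ − η*‖ ≤ C₁ and ‖η₁ − η^{sf}‖ ≤ C₁. Then after k iterations, the best feasible value found satisfies f(η_k^{best}) − f(η*) ≲ (C₁² + C₂² Σ_{n=1}^k h_n²) / (Σ_{n=1}^k h_n). -/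
open RealInnerProductSpace


lemma aux_bound2 {p : ℕ} (η g : ℕ → EuclideanSpace ℝ (Fin p)) (h : ℕ → ℝ)
    (hh : ∀ n, 0 < h n)
    (hupdate : ∀ n, η (n + 1) = η n - h n • g n)
    (C₂ : ℝ) (hg : ∀ n, ‖g n‖ ≤ C₂)
    (z : EuclideanSpace ℝ (Fin p)) (k : ℕ) (m : ℝ)
    (hm : ∀ n ∈ Finset.Icc 1 k, m ≤ ⟪g n, η n - z⟫) :
    2 * m * (∑ n ∈ Finset.Icc 1 k, h n)
      ≤ ‖η 1 - z‖ ^ 2 + C₂ ^ 2 * ∑ n ∈ Finset.Icc 1 k, (h n) ^ 2 := by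
  have key : ∀ j : ℕ, ‖η (j + 1) - z‖ ^ 2
      = ‖η 1 - z‖ ^ 2
        - ∑ n ∈ Finset.Icc 1 j, (2 * h n * ⟪g n, η n - z⟫ - (h n) ^ 2 * ‖g n‖ ^ 2) := by
    intro j
    induction j with
    | zero => simp
    | succ j ih =>
      rw [Finset.sum_Icc_succ_top (by omega : 1 ≤ j + 1)]
      have e1 : η (j + 1 + 1) - z = (η (j + 1) - z) - h (j + 1) • g (j + 1) := by
        rw [hupdate]; abel
      rw [e1, norm_sub_sq_real, real_inner_smul_right, norm_smul, mul_pow,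
        Real.norm_eq_abs, sq_abs, real_inner_comm, ih]
      ring
  have h1 : ∑ n ∈ Finset.Icc 1 k, (2 * h n * ⟪g n, η n - z⟫ - (h n) ^ 2 * ‖g n‖ ^ 2)
      ≤ ‖η 1 - z‖ ^ 2 := by
    have := key k
    nlinarith [sq_nonneg ‖η (k + 1) - z‖]
  have h2 : ∀ n ∈ Finset.Icc 1 k,
      2 * m * h n ≤ (2 * h n * ⟪g n, η n - z⟫ - (h n) ^ 2 * ‖g n‖ ^ 2) + C₂ ^ 2 * (h n) ^ 2 := by
    intro n hn
    have hmn := hm n hn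
    have hgn : ‖g n‖ ^ 2 ≤ C₂ ^ 2 := by
      have := hg n; nlinarith [norm_nonneg (g n)]
    nlinarith [(hh n).le, sq_nonneg (h n)]
  calc 2 * m * (∑ n ∈ Finset.Icc 1 k, h n)
      = ∑ n ∈ Finset.Icc 1 k, 2 * m * h n := by rw [Finset.mul_sum]
    _ ≤ ∑ n ∈ Finset.Icc 1 k, ((2 * h n * ⟪g n, η n - z⟫ - (h n) ^ 2 * ‖g n‖ ^ 2) + C₂ ^ 2 * (h n) ^ 2) :=
        Finset.sum_le_sum h2
    _ = (∑ n ∈ Finset.Icc 1 k, (2 * h n * ⟪g n, η n - z⟫ - (h n) ^ 2 * ‖g n‖ ^ 2))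
        + C₂ ^ 2 * ∑ n ∈ Finset.Icc 1 k, (h n) ^ 2 := by
        rw [Finset.sum_add_distrib, Finset.mul_sum]
    _ ≤ ‖η 1 - z‖ ^ 2 + C₂ ^ 2 * ∑ n ∈ Finset.Icc 1 k, (h n) ^ 2 := by linarith

set_option maxHeartbeats 1000000 in
theorem stmt_11 {p : ℕ} (f ψ : EuclideanSpace ℝ (Fin p) → ℝ)
    (hf : ConvexOn ℝ Set.univ f) (hψ : ConvexOn ℝ Set.univ ψ)
    (Q : Set (EuclideanSpace ℝ (Fin p))) (hQ : Q = {η | ψ η ≤ 0})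
    (ηsf : EuclideanSpace ℝ (Fin p)) (hsf : ψ ηsf < 0)
    (ηstar : EuclideanSpace ℝ (Fin p)) (hstar_mem : ηstar ∈ Q)
    (hstar_min : ∀ η ∈ Q, f ηstar ≤ f η)
    (C₁ C₂ : ℝ) (h : ℕ → ℝ) (hh : ∀ n, 0 < h n)
    (η g : ℕ → EuclideanSpace ℝ (Fin p))
    (hupdate : ∀ n, η (n + 1) = η n - h n • g n)
    (hgbound : ∀ n, ‖g n‖ ≤ C₂)
    (hgsub : ∀ n, (η n ∈ Q → ∀ z, ⟪g n, z - η n⟫ ≤ f z - f (η n)) ∧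
      (η n ∉ Q → ∀ z, ⟪g n, z - η n⟫ ≤ ψ z - ψ (η n)))
    (hinit1 : ‖η 1 - ηstar‖ ≤ C₁) (hinit2 : ‖η 1 - ηsf‖ ≤ C₁) :
    ∃ C : ℝ, ∀ k : ℕ, 0 < k →
      sInf ((fun i => f (η i)) '' {i | 1 ≤ i ∧ i ≤ k ∧ η i ∈ Q}) - f ηstar
        ≤ C * ((C₁ ^ 2 + C₂ ^ 2 * ∑ n ∈ Finset.Icc 1 k, (h n) ^ 2) /
            (∑ n ∈ Finset.Icc 1 k, h n)) := by
  classical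
  set r : ℝ := -ψ ηsf with hrdef
  have hr0 : 0 < r := by simp only [hrdef]; linarith
  set M : ℝ := max (f ηsf - f ηstar) 0 with hMdef
  have hM0 : 0 ≤ M := le_max_right _ _
  have hMsf : f ηsf - f ηstar ≤ M := le_max_left _ _
  have hMr : 0 < M + r := by linarith
  have hψstar : ψ ηstar ≤ 0 := by rw [hQ] at hstar_mem; exact hstar_mem
  set P : ℝ := max 0 (-(f ηstar)) with hPdef
  have hP0 : 0 ≤ P := le_max_left _ _
  have hPf : -(f ηstar) ≤ P := le_max_right _ _
  have hC₁0 : 0 ≤ C₁ := le_trans (norm_nonneg _) hinit1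
  set G : ℝ := (if hex : (∃ n, 1 ≤ n ∧ η n ∈ Q)
      then max (f (η (Nat.find hex)) - f ηstar) 0 else 0) with hGdef
  have hG0 : 0 ≤ G := by
    rw [hGdef]; split
    · exact le_max_right _ _
    · exact le_rfl
  refine ⟨(M + r + G + P) / (2 * r), ?_⟩
  intro k hk
  set S₁ := ∑ n ∈ Finset.Icc 1 k, h n with hS₁def
  set S₂ := ∑ n ∈ Finset.Icc 1 k, (h n) ^ 2 with hS₂def
  have hS₁pos : 0 < S₁ := Finset.sum_pos (fun n _ => hh n)
    ⟨1, by simp [Finset.mem_Icc]; omega⟩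
  have hS₂0 : 0 ≤ S₂ := Finset.sum_nonneg fun n _ => sq_nonneg _
  set D := C₁ ^ 2 + C₂ ^ 2 * S₂ with hDdef
  have hD0 : 0 ≤ D := by positivity
  have h2r : (0:ℝ) < 2 * r := by linarith
  rw [div_mul_eq_mul_div, le_div_iff₀ h2r, ← mul_div_assoc, le_div_iff₀ hS₁pos]
  -- goal : (sInf ... - f ηstar) * (2 * r) * S₁ ≤ (M + r + G + P) * D
  -- infeasible points have positive ψ
  have hpos : ∀ n, η n ∉ Q → 0 < ψ (η n) := by
    intro n hn
    rw [hQ] at hn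
    exact lt_of_not_ge hn
  -- the inner-product lower bound ⟪g n, w - z⟫ direction helper
  have hflip : ∀ (n : ℕ) (z : EuclideanSpace ℝ (Fin p)),
      ⟪g n, η n - z⟫ = -⟪g n, z - η n⟫ := by
    intro n z
    rw [show η n - z = -(z - η n) by abel, inner_neg_right]
  by_cases hfe : ∃ i, 1 ≤ i ∧ i ≤ k ∧ η i ∈ Q
  · obtain ⟨i, hi1, hik, hiQ⟩ := hfe
    have hmemi : f (η i) ∈ ((fun i => f (η i)) '' {i | 1 ≤ i ∧ i ≤ k ∧ η i ∈ Q}) :=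
      ⟨i, ⟨hi1, hik, hiQ⟩, rfl⟩
    have hbdd : BddBelow ((fun i => f (η i)) '' {i | 1 ≤ i ∧ i ≤ k ∧ η i ∈ Q}) := by
      refine ⟨f ηstar, ?_⟩
      rintro x ⟨j, ⟨-, -, hjQ⟩, rfl⟩
      exact hstar_min _ hjQ
    set B := sInf ((fun i => f (η i)) '' {i | 1 ≤ i ∧ i ≤ k ∧ η i ∈ Q}) - f ηstar with hBdef
    have hB0 : 0 ≤ B := by
      have : f ηstar ≤ sInf ((fun i => f (η i)) '' {i | 1 ≤ i ∧ i ≤ k ∧ η i ∈ Q}) :=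
        le_csInf ⟨_, hmemi⟩ (by rintro x ⟨j, ⟨-, -, hjQ⟩, rfl⟩; exact hstar_min _ hjQ)
      simp only [hBdef]; linarith
    have hBle : ∀ j, 1 ≤ j → j ≤ k → η j ∈ Q → f ηstar + B ≤ f (η j) := by
      intro j hj1 hjk hjQ
      have := csInf_le hbdd (⟨j, ⟨hj1, hjk, hjQ⟩, rfl⟩ :
        f (η j) ∈ ((fun i => f (η i)) '' {i | 1 ≤ i ∧ i ≤ k ∧ η i ∈ Q}))
      simp only [hBdef]; linarith
    rcases le_or_gt B (M + r) with hcap | hcap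
    · -- small-gap case: use mixed point z = (1-l) ηstar + l ηsf
      set l := B / (M + r) with hldef
      have hl0 : 0 ≤ l := div_nonneg hB0 hMr.le
      have hl1 : l ≤ 1 := (div_le_one hMr).2 hcap
      have hlB : l * (M + r) = B := div_mul_cancel₀ B hMr.ne'
      set z := (1 - l) • ηstar + l • ηsf with hzdef
      have hznorm : ‖η 1 - z‖ ≤ C₁ := by
        have e : η 1 - z = (1 - l) • (η 1 - ηstar) + l • (η 1 - ηsf) := by
          rw [hzdef]; module
        calc ‖η 1 - z‖ ≤ ‖(1 - l) • (η 1 - ηstar)‖ + ‖l • (η 1 - ηsf)‖ := by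
              rw [e]; exact norm_add_le _ _
          _ = (1 - l) * ‖η 1 - ηstar‖ + l * ‖η 1 - ηsf‖ := by
              rw [norm_smul, norm_smul, Real.norm_eq_abs, Real.norm_eq_abs,
                abs_of_nonneg (by linarith), abs_of_nonneg hl0]
          _ ≤ (1 - l) * C₁ + l * C₁ := by
              have h1 : (0:ℝ) ≤ 1 - l := by linarith
              gcongr
          _ = C₁ := by ring
      have hfz : f z ≤ f ηstar + l * M := by
        have := hf.2 (Set.mem_univ ηstar) (Set.mem_univ ηsf)
          (by linarith : (0:ℝ) ≤ 1 - l) hl0 (by ring)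
        simp only [smul_eq_mul] at this
        have h2 : l * (f ηsf - f ηstar) ≤ l * M :=
          mul_le_mul_of_nonneg_left hMsf hl0
        rw [hzdef]
        nlinarith
      have hψz : ψ z ≤ -(l * r) := by
        have := hψ.2 (Set.mem_univ ηstar) (Set.mem_univ ηsf)
          (by linarith : (0:ℝ) ≤ 1 - l) hl0 (by ring)
        have h1 : (1 - l) * ψ ηstar ≤ 0 :=
          mul_nonpos_of_nonneg_of_nonpos (by linarith) hψstar
        have h2 : l * ψ ηsf = -(l * r) := by rw [hrdef]; ring
        simp only [smul_eq_mul] at this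
        rw [hzdef]
        nlinarith
      have key := aux_bound2 η g h hh hupdate C₂ hgbound z k (l * r) ?_
      · have hD : 2 * (l * r) * S₁ ≤ D := by
          have hsq : ‖η 1 - z‖ ^ 2 ≤ C₁ ^ 2 :=
            pow_le_pow_left₀ (norm_nonneg _) hznorm 2
          calc 2 * (l * r) * S₁ ≤ ‖η 1 - z‖ ^ 2 + C₂ ^ 2 * S₂ := key
            _ ≤ C₁ ^ 2 + C₂ ^ 2 * S₂ := by linarith
            _ = D := by rw [hDdef]
        -- B * (2r) * S₁ = 2 l r S₁ (M+r) ≤ D (M+r) ≤ (M+r+G+P) D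
        have e : B * (2 * r) * S₁ = (2 * (l * r) * S₁) * (M + r) := by
          rw [← hlB]; ring
        rw [e]
        have hcomb : (2 * (l * r) * S₁) * (M + r) ≤ D * (M + r) :=
          mul_le_mul_of_nonneg_right hD hMr.le
        nlinarith [hcomb, mul_nonneg (add_nonneg hG0 hP0) hD0]
      · intro n hn
        rw [Finset.mem_Icc] at hn
        by_cases hnQ : η n ∈ Q
        · have hsub := (hgsub n).1 hnQ z
          have hfn := hBle n hn.1 hn.2 hnQ
          have hlB' : l * M + l * r = B := by rw [← hlB]; ring
          rw [hflip]
          linarith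
        · have hsub := (hgsub n).2 hnQ z
          have hψn := hpos n hnQ
          rw [hflip]
          linarith
    · -- large-gap case: z = ηsf with m = r
      have hex : ∃ n, 1 ≤ n ∧ η n ∈ Q := ⟨i, hi1, hiQ⟩
      have hBG : B ≤ G := by
        rw [hGdef, dif_pos hex]
        have hn₀ := Nat.find_spec hex
        have hn₀k : Nat.find hex ≤ k := le_trans (Nat.find_min' hex ⟨hi1, hiQ⟩) hik
        have := hBle _ hn₀.1 hn₀k hn₀.2
        have h2 : f (η (Nat.find hex)) - f ηstar ≤ max (f (η (Nat.find hex)) - f ηstar) 0 :=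
          le_max_left _ _
        linarith
      have key := aux_bound2 η g h hh hupdate C₂ hgbound ηsf k r ?_
      · have hD : 2 * r * S₁ ≤ D := by
          have hsq : ‖η 1 - ηsf‖ ^ 2 ≤ C₁ ^ 2 :=
            pow_le_pow_left₀ (norm_nonneg _) hinit2 2
          calc 2 * r * S₁ ≤ ‖η 1 - ηsf‖ ^ 2 + C₂ ^ 2 * S₂ := key
            _ ≤ C₁ ^ 2 + C₂ ^ 2 * S₂ := by linarith
            _ = D := by rw [hDdef]
        have hcomb : B * (2 * r * S₁) ≤ G * D :=
          calc B * (2 * r * S₁) ≤ G * (2 * r * S₁) :=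
                mul_le_mul_of_nonneg_right hBG (by positivity)
            _ ≤ G * D := mul_le_mul_of_nonneg_left hD hG0
        nlinarith [hcomb, mul_nonneg (add_nonneg (add_nonneg hM0 hr0.le) hP0) hD0]
      · intro n hn
        rw [Finset.mem_Icc] at hn
        by_cases hnQ : η n ∈ Q
        · have hsub := (hgsub n).1 hnQ ηsf
          have hfn := hBle n hn.1 hn.2 hnQ
          rw [hflip]
          linarith
        · have hsub := (hgsub n).2 hnQ ηsf
          have hψn := hpos n hnQ
          rw [hflip]
          linarith
  · -- no feasible iterate in [1,k]: sInf ∅ = 0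
    have hempty : {i | 1 ≤ i ∧ i ≤ k ∧ η i ∈ Q} = ∅ := by
      ext j
      simp only [Set.mem_setOf_eq, Set.mem_empty_iff_false, iff_false]
      rintro ⟨hj1, hjk, hjQ⟩
      exact hfe ⟨j, hj1, hjk, hjQ⟩
    rw [hempty, Set.image_empty, Real.sInf_empty]
    have key := aux_bound2 η g h hh hupdate C₂ hgbound ηsf k r ?_
    · have hD : 2 * r * S₁ ≤ D := by
        have hsq : ‖η 1 - ηsf‖ ^ 2 ≤ C₁ ^ 2 :=
          pow_le_pow_left₀ (norm_nonneg _) hinit2 2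
        calc 2 * r * S₁ ≤ ‖η 1 - ηsf‖ ^ 2 + C₂ ^ 2 * S₂ := key
          _ ≤ C₁ ^ 2 + C₂ ^ 2 * S₂ := by linarith
          _ = D := by rw [hDdef]
      have hcomb : (-(f ηstar)) * (2 * r * S₁) ≤ P * D :=
        calc (-(f ηstar)) * (2 * r * S₁) ≤ P * (2 * r * S₁) :=
              mul_le_mul_of_nonneg_right hPf (by positivity)
          _ ≤ P * D := mul_le_mul_of_nonneg_left hD hP0
      nlinarith [hcomb, mul_nonneg (add_nonneg (add_nonneg hM0 hr0.le) hG0) hD0]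
    · intro n hn
      rw [Finset.mem_Icc] at hn
      have hnQ : η n ∉ Q := fun hc => hfe ⟨n, hn.1, hn.2, hc⟩
      have hsub := (hgsub n).2 hnQ ηsf
      have hψn := hpos n hnQ
      rw [hflip]
      linarith
end

section
/- Let f₀ and f₁ be the joint densities of (X, Y) under the Gaussian linear model Y = Xβ + ε, with X having i.i.d. rows X_i ~ N(0, Σ) and ε ~ N(0, σ² I_n), for parameters β = β* and β = β' respectively. If 2‖Σ^{1/2}(β' − β*)‖²/σ² < 1, then the chi-squared divergence satisfies χ²(f₁, f₀) = (1 − 2‖Σ^{1/2}(β' − β*)‖²/σ²)^{−n/2} − 1. -/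
set_option maxHeartbeats 1000000

open MeasureTheory ProbabilityTheory Matrix Real

lemma gauss_shift_integral (b m : ℝ) : ∫ y : ℝ, rexp (-(b*(y-m)^2)) = √(π/b) := by
  have h : ∫ y : ℝ, rexp (-b*(y-m)^2) = ∫ y : ℝ, rexp (-b*y^2) :=
    integral_sub_right_eq_self (fun y => rexp (-b*y^2)) m
  simp only [neg_mul] at h
  rw [h, show (fun y : ℝ => rexp (-(b*y^2))) = fun y : ℝ => rexp (-b*y^2) by funext y; ring_nf]
  exact integral_gaussian b

lemma gauss_shift_integrable {b : ℝ} (hb : 0 < b) (m : ℝ) :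
    Integrable (fun y : ℝ => rexp (-(b*(y-m)^2))) := by
  have := (integrable_exp_neg_mul_sq hb).comp_sub_right m
  simpa [neg_mul] using this

lemma key1_fun_eq {t w : ℝ} (hc : 0 < 1 - 2*t*w^2) (a : ℝ) :
    (fun g : ℝ => rexp (t*(a+g*w)^2) * gaussianPDFReal 0 1 g)
      = fun g => ((√(2*π))⁻¹ * rexp (t*a^2/(1-2*t*w^2))) *
          rexp (-((1-2*t*w^2)/2*(g - 2*t*a*w/(1-2*t*w^2))^2)) := by
  funext g
  rw [gaussianPDFReal]
  push_cast
  rw [mul_one, mul_comm (rexp _), mul_assoc, mul_assoc, ← Real.exp_add, ← Real.exp_add]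
  congr 1
  congr 1
  linear_combination (-(t*a^2 + 2*t*a*w*g - 2*t^2*a^2*w^2*(1-2*t*w^2)⁻¹)) * mul_inv_cancel₀ hc.ne'

lemma key1 {t w : ℝ} (ht : 0 ≤ t) (hc : 0 < 1 - 2*t*w^2) (a : ℝ) :
    ∫ g : ℝ, rexp (t*(a+g*w)^2) * gaussianPDFReal 0 1 g
      = (√(1-2*t*w^2))⁻¹ * rexp (t*a^2/(1-2*t*w^2)) := by
  rw [key1_fun_eq hc a, integral_const_mul, gauss_shift_integral]
  have hc' : (1-2*t*w^2) ≠ 0 := hc.ne'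
  rw [show π / ((1-2*t*w^2)/2) = 2*π / (1-2*t*w^2) by field_simp]
  rw [Real.sqrt_div (by positivity : (0:ℝ) ≤ 2*π)]
  have h2 : (0:ℝ) < √(2*π) := Real.sqrt_pos.mpr (by positivity)
  have h3 : (0:ℝ) < √(1-2*t*w^2) := Real.sqrt_pos.mpr hc
  field_simp

lemma key1_integrable {t w : ℝ} (ht : 0 ≤ t) (hc : 0 < 1 - 2*t*w^2) (a : ℝ) :
    Integrable (fun g : ℝ => rexp (t*(a+g*w)^2) * gaussianPDFReal 0 1 g) := by
  rw [key1_fun_eq hc a]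
  exact (gauss_shift_integrable (by positivity) _).const_mul _

lemma key1_lintegral {t w : ℝ} (ht : 0 ≤ t) (hc : 0 < 1 - 2*t*w^2) (a : ℝ) :
    ∫⁻ g : ℝ, ENNReal.ofReal (rexp (t*(a+g*w)^2)) ∂gaussianReal 0 1
      = ENNReal.ofReal ((√(1-2*t*w^2))⁻¹ * rexp (t*a^2/(1-2*t*w^2))) := by
  have hmf : Measurable fun g : ℝ => ENNReal.ofReal (rexp (t*(a+g*w)^2)) := by
    apply Measurable.ennreal_ofReal
    exact Real.measurable_exp.comp (by measurability)
  rw [gaussianReal_of_var_ne_zero 0 one_ne_zero,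
    lintegral_withDensity_eq_lintegral_mul _ (measurable_gaussianPDF 0 1) hmf]
  have heq : ∀ g : ℝ, (gaussianPDF 0 1 * fun g => ENNReal.ofReal (rexp (t*(a+g*w)^2))) g
      = ENNReal.ofReal (rexp (t*(a+g*w)^2) * gaussianPDFReal 0 1 g) := by
    intro g
    simp only [Pi.mul_apply, gaussianPDF]
    rw [← ENNReal.ofReal_mul (gaussianPDFReal_nonneg 0 1 g), mul_comm]
  simp_rw [heq]
  rw [← ofReal_integral_eq_lintegral_ofReal (key1_integrable ht hc a)
    (Filter.Eventually.of_forall fun g =>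
      mul_nonneg (Real.exp_pos _).le (gaussianPDFReal_nonneg 0 1 g))]
  rw [key1 ht hc a]

lemma key_multi : ∀ (p : ℕ) (w : Fin p → ℝ) (t a : ℝ), 0 ≤ t →
    0 < 1 - 2*t*(∑ j, w j^2) →
    ∫⁻ g : Fin p → ℝ, ENNReal.ofReal (rexp (t*(a + ∑ j, g j * w j)^2))
        ∂(Measure.pi fun _ : Fin p => gaussianReal 0 1)
      = ENNReal.ofReal ((√(1-2*t*(∑ j, w j^2)))⁻¹ * rexp (t*a^2/(1-2*t*(∑ j, w j^2)))) := by
  intro p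
  induction p with
  | zero =>
      intro w t a ht hc
      simp [lintegral_const]
  | succ p ih =>
      intro w t a ht hc
      set S' : ℝ := ∑ j : Fin p, w j.succ ^ 2 with hS'
      have hsum : (∑ j : Fin (p+1), w j ^ 2) = w 0 ^ 2 + S' := by
        rw [Fin.sum_univ_succ]
      have hS'nonneg : 0 ≤ S' := Finset.sum_nonneg fun _ _ => sq_nonneg _
      have hw0 : 0 ≤ w 0 ^ 2 := sq_nonneg _
      have hc' : 0 < 1 - 2*t*S' := by nlinarith
      have hc0 : 0 < 1 - 2*(t/(1-2*t*S'))*(w 0)^2 := by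
        rw [sub_pos, show 2*(t/(1-2*t*S'))*(w 0)^2 = (2*t*(w 0)^2)/(1-2*t*S') by ring,
          div_lt_one hc']
        nlinarith
      set e := MeasurableEquiv.piFinSuccAbove (fun _ : Fin (p+1) => ℝ) 0 with he
      have hmp := (measurePreserving_piFinSuccAbove
        (fun _ : Fin (p+1) => gaussianReal (0:ℝ) 1) 0)
      have hmeas : Measurable fun g : Fin (p+1) → ℝ =>
          ENNReal.ofReal (rexp (t*(a + ∑ j, g j * w j)^2)) := by
        apply Measurable.ennreal_ofReal
        exact Real.measurable_exp.comp (by measurability)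
      rw [← (hmp.symm e).lintegral_comp hmeas]
      have hmeas2 : Measurable fun z : ℝ × (Fin p → ℝ) =>
          ENNReal.ofReal (rexp (t*(a + ∑ j : Fin (p+1), (e.symm z) j * w j)^2)) :=
        hmeas.comp e.symm.measurable
      rw [lintegral_prod _ hmeas2.aemeasurable]
      have happ : ∀ (x : ℝ) (h : Fin p → ℝ),
          (a + ∑ j : Fin (p+1), (e.symm (x, h)) j * w j)
          = (a + x * w 0) + ∑ j : Fin p, h j * w j.succ := by
        intro x h
        rw [Fin.sum_univ_succ]
        simp [he, MeasurableEquiv.piFinSuccAbove, Fin.succAbove_zero]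
        ring
      simp_rw [happ]
      have inner : ∀ x : ℝ,
          ∫⁻ h : Fin p → ℝ, ENNReal.ofReal
              (rexp (t*((a + x * w 0) + ∑ j : Fin p, h j * w j.succ)^2))
            ∂(Measure.pi fun _ : Fin p => gaussianReal 0 1)
          = ENNReal.ofReal ((√(1-2*t*S'))⁻¹ * rexp (t*(a + x * w 0)^2/(1-2*t*S'))) :=
        fun x => ih (fun j => w j.succ) t (a + x * w 0) ht hc'
      simp_rw [inner]
      have hsplit : ∀ x : ℝ,
          ENNReal.ofReal ((√(1-2*t*S'))⁻¹ * rexp (t*(a + x * w 0)^2/(1-2*t*S')))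
          = ENNReal.ofReal ((√(1-2*t*S'))⁻¹)
            * ENNReal.ofReal (rexp ((t/(1-2*t*S'))*(a + x * w 0)^2)) := by
        intro x
        rw [show t*(a + x * w 0)^2/(1-2*t*S') = (t/(1-2*t*S'))*(a + x * w 0)^2 by ring]
        exact ENNReal.ofReal_mul (by positivity)
      simp_rw [hsplit]
      rw [lintegral_const_mul _ (by
        apply Measurable.ennreal_ofReal
        exact Real.measurable_exp.comp (by measurability))]
      rw [key1_lintegral (div_nonneg ht hc'.le) hc0 a]
      rw [← ENNReal.ofReal_mul (by positivity), hsum]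
      congr 1
      have hcpos : 0 < 1 - 2*t*(w 0^2 + S') := by rw [← hsum]; exact hc
      have h1 : 1 - 2*(t/(1-2*t*S'))*(w 0)^2 = (1 - 2*t*(w 0^2 + S'))/(1-2*t*S') := by
        field_simp; ring
      rw [h1, Real.sqrt_div hcpos.le]
      have hs' : 0 < √(1-2*t*S') := Real.sqrt_pos.mpr hc'
      have hs : 0 < √(1-2*t*(w 0^2+S')) := Real.sqrt_pos.mpr hcpos
      rw [show t / (1-2*t*S') * a^2 / ((1-2*t*(w 0^2+S'))/(1-2*t*S'))
        = t*a^2/(1-2*t*(w 0^2+S')) by rw [div_div_eq_mul_div, div_mul_eq_mul_div, div_mul_cancel₀ _ hc'.ne']]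
      field_simp

lemma lintegral_pi_prod {H : Type*} [MeasurableSpace H] (ν : Measure H) [SigmaFinite ν]
    {f : H → ENNReal} (hf : Measurable f) : ∀ n : ℕ,
    ∫⁻ g : Fin n → H, ∏ i, f (g i) ∂Measure.pi (fun _ : Fin n => ν)
      = (∫⁻ h, f h ∂ν) ^ n := by
  intro n
  induction n with
  | zero => simp [lintegral_const, Measure.pi_univ]
  | succ n ih =>
      set e := MeasurableEquiv.piFinSuccAbove (fun _ : Fin (n+1) => H) 0 with he
      have hmp := (measurePreserving_piFinSuccAbove (fun _ : Fin (n+1) => ν) 0)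
      have hmeas : Measurable fun g : Fin (n+1) → H => ∏ i, f (g i) := by
        apply Finset.measurable_prod
        exact fun i _ => hf.comp (measurable_pi_apply i)
      rw [← (hmp.symm e).lintegral_comp hmeas]
      have hmeas2 : Measurable fun z : H × (Fin n → H) => ∏ i : Fin (n+1), f (e.symm z i) :=
        hmeas.comp e.symm.measurable
      rw [lintegral_prod _ hmeas2.aemeasurable]
      have happ : ∀ (x : H) (h : Fin n → H),
          (∏ i : Fin (n+1), f (e.symm (x, h) i)) = f x * ∏ i : Fin n, f (h i) := by
        intro x h
        rw [Fin.prod_univ_succ]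
        simp [he, MeasurableEquiv.piFinSuccAbove, Fin.succAbove_zero]
      simp_rw [happ]
      have hmeas3 : Measurable fun h : Fin n → H => ∏ i : Fin n, f (h i) := by
        apply Finset.measurable_prod
        exact fun i _ => hf.comp (measurable_pi_apply i)
      simp_rw [lintegral_const_mul _ hmeas3, ih]
      rw [lintegral_mul_const _ hf, pow_succ, mul_comm]

lemma exp_div_aux {c : ℝ} (hc : 0 < c) (u1 u2 v u3 : ℝ) (h : 2*u1 - u2 = v + u3) :
    (c⁻¹ * rexp u1)^2 / (c⁻¹ * rexp u2) = rexp v * (c⁻¹ * rexp u3) := by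
  have e2 : (c⁻¹ * rexp u1)^2 = c⁻¹ * c⁻¹ * rexp (u1 + u1) := by rw [Real.exp_add]; ring
  rw [e2, div_eq_iff (by positivity)]
  rw [show rexp v * (c⁻¹ * rexp u3) * (c⁻¹ * rexp u2)
      = c⁻¹ * c⁻¹ * (rexp v * (rexp u3 * rexp u2)) by ring, ← Real.exp_add, ← Real.exp_add]
  rw [show u1 + u1 = v + (u3 + u2) by linarith]

lemma inner_y {σ : ℝ} (hσ : 0 < σ) {n : ℕ} (a b : Fin n → ℝ) :
    ∫ y : Fin n → ℝ, (∏ i, (√(2*π*σ^2))⁻¹ * rexp (-(y i - a i)^2/(2*σ^2)))^2 /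
        (∏ i, (√(2*π*σ^2))⁻¹ * rexp (-(y i - b i)^2/(2*σ^2)))
      = rexp (∑ i, (a i - b i)^2/σ^2) := by
  have hc : (0:ℝ) < √(2*π*σ^2) := Real.sqrt_pos.mpr (by positivity)
  have hσ2 : (σ:ℝ)^2 ≠ 0 := by positivity
  have hpt : ∀ y : Fin n → ℝ,
      (∏ i, (√(2*π*σ^2))⁻¹ * rexp (-(y i - a i)^2/(2*σ^2)))^2 /
        (∏ i, (√(2*π*σ^2))⁻¹ * rexp (-(y i - b i)^2/(2*σ^2)))
      = ∏ i, (rexp ((a i - b i)^2/σ^2) *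
          ((√(2*π*σ^2))⁻¹ * rexp (-((2*σ^2)⁻¹ * (y i - (2*a i - b i))^2)))) := by
    intro y
    rw [← Finset.prod_pow, ← Finset.prod_div_distrib]
    refine Finset.prod_congr rfl fun i _ => ?_
    refine exp_div_aux hc _ _ _ _ ?_
    field_simp
    ring
  simp_rw [hpt]
  rw [integral_fintype_prod_volume_eq_prod (ι := Fin n)
    (f := fun i u => rexp ((a i - b i)^2/σ^2) *
      ((√(2*π*σ^2))⁻¹ * rexp (-((2*σ^2)⁻¹ * (u - (2*a i - b i))^2))))]
  have hfact : ∀ i : Fin n,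
      ∫ u : ℝ, rexp ((a i - b i)^2/σ^2) *
        ((√(2*π*σ^2))⁻¹ * rexp (-((2*σ^2)⁻¹ * (u - (2*a i - b i))^2)))
      = rexp ((a i - b i)^2/σ^2) := by
    intro i
    rw [integral_const_mul, integral_const_mul, gauss_shift_integral]
    rw [show π / (2*σ^2)⁻¹ = 2*π*σ^2 by field_simp]
    rw [inv_mul_cancel₀ hc.ne']
    rw [mul_one]
  simp_rw [hfact]
  rw [← Real.exp_sum]

theorem stmt_17 {n p : ℕ} (σ : ℝ) (hσ : 0 < σ)
    (A Sig : Matrix (Fin p) (Fin p) ℝ)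
    (hA : A.PosSemidef) (hSig : Sig.PosSemidef) (hA2 : A * A = Sig)
    (βstar β' : Fin p → ℝ)
    (hsmall : 2 * (∑ i, (A.mulVec (β' - βstar)) i ^ 2) / σ ^ 2 < 1)
    (μX : Measure (Fin n → Fin p → ℝ))
    (hμX : μX = (Measure.pi fun _ : Fin n => Measure.pi fun _ : Fin p =>
        gaussianReal 0 1).map (fun g i => A.mulVec (g i)))
    (d : (Fin p → ℝ) → (Fin n → Fin p → ℝ) → (Fin n → ℝ) → ℝ)
    (hd : ∀ β x y, d β x y = ∏ i, (Real.sqrt (2 * Real.pi * σ ^ 2))⁻¹ *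
        Real.exp (-(y i - x i ⬝ᵥ β) ^ 2 / (2 * σ ^ 2))) :
    (∫ x, (∫ y : Fin n → ℝ, (d β' x y) ^ 2 / d βstar x y) ∂μX) - 1
      = (1 - 2 * (∑ i, (A.mulVec (β' - βstar)) i ^ 2) / σ ^ 2) ^ (-(n : ℝ) / 2) - 1 := by
  have hσ2 : (σ:ℝ)^2 ≠ 0 := by positivity
  set δ : Fin p → ℝ := β' - βstar with hδ
  set w : Fin p → ℝ := A.mulVec δ with hw
  set S : ℝ := ∑ i, w i ^ 2 with hS
  have hSnonneg : 0 ≤ S := Finset.sum_nonneg fun _ _ => sq_nonneg _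
  have hcpos : 0 < 1 - 2*(σ^2)⁻¹*S := by
    have : 2*(σ^2)⁻¹*S = 2*S/σ^2 := by ring
    rw [this, sub_pos]
    calc 2*S/σ^2 = 2*S/σ^2 := rfl
    _ < 1 := by
      have := hsmall
      rw [show (2:ℝ) * S / σ^2 = 2 * (∑ i, (A.mulVec (β' - βstar)) i ^ 2) / σ ^ 2 by rw [hS, hw, hδ]]
      exact this
  congr 1
  -- inner integral
  have hinner : ∀ x : Fin n → Fin p → ℝ,
      (∫ y : Fin n → ℝ, (d β' x y) ^ 2 / d βstar x y)
      = rexp (∑ i, (x i ⬝ᵥ δ)^2/σ^2) := by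
    intro x
    simp_rw [hd]
    rw [inner_y hσ (fun i => x i ⬝ᵥ β') (fun i => x i ⬝ᵥ βstar)]
    congr 1
    refine Finset.sum_congr rfl fun i _ => ?_
    rw [hδ, dotProduct_sub]
  simp_rw [hinner, hμX]
  -- measurability facts
  have hdot : ∀ (i : Fin n), Measurable fun x : Fin n → Fin p → ℝ => x i ⬝ᵥ δ := by
    intro i
    simp only [dotProduct]
    exact Finset.measurable_sum _ fun j _ =>
      ((measurable_pi_apply j).comp (measurable_pi_apply i)).mul_const _
  have hF : Measurable fun x : Fin n → Fin p → ℝ => rexp (∑ i, (x i ⬝ᵥ δ)^2/σ^2) :=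
    Real.measurable_exp.comp (Finset.measurable_sum _ fun i _ =>
      ((hdot i).pow_const 2).div_const _)
  have hT : Measurable fun g : Fin n → Fin p → ℝ => (fun i => A.mulVec (g i)) := by
    apply measurable_pi_lambda
    intro i
    apply measurable_pi_lambda
    intro k
    simp only [Matrix.mulVec, dotProduct]
    refine Finset.measurable_sum _ fun j _ => ?_
    have hgij : Measurable fun g : Fin n → Fin p → ℝ => g i j :=
      (measurable_pi_apply j).comp (measurable_pi_apply i)
    exact hgij.const_mul _
  rw [integral_eq_lintegral_of_nonneg_ae
    (Filter.Eventually.of_forall fun x => (Real.exp_pos _).le) hF.aestronglyMeasurable]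
  rw [lintegral_map hF.ennreal_ofReal hT]
  -- symmetry step
  have hAt : Aᵀ = A := by
    rw [← Matrix.conjTranspose_eq_transpose_of_trivial]
    exact hA.1
  have hsym : ∀ u : Fin p → ℝ, (A.mulVec u) ⬝ᵥ δ = u ⬝ᵥ w := by
    intro u
    rw [hw, Matrix.dotProduct_mulVec u A δ, ← Matrix.mulVec_transpose, hAt,
      dotProduct_comm]
  have hofp : ∀ g : Fin n → Fin p → ℝ,
      ENNReal.ofReal (rexp (∑ i, ((A.mulVec (g i)) ⬝ᵥ δ)^2/σ^2))
      = ∏ i, ENNReal.ofReal (rexp ((g i ⬝ᵥ w)^2/σ^2)) := by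
    intro g
    simp_rw [hsym]
    rw [Real.exp_sum, ENNReal.ofReal_prod_of_nonneg fun i _ => (Real.exp_pos _).le]
  simp_rw [hofp]
  have hfmeas : Measurable fun h : Fin p → ℝ => ENNReal.ofReal (rexp ((h ⬝ᵥ w)^2/σ^2)) := by
    apply Measurable.ennreal_ofReal
    apply Real.measurable_exp.comp
    apply Measurable.div_const
    apply Measurable.pow_const
    simp only [dotProduct]
    exact Finset.measurable_sum _ fun j _ => (measurable_pi_apply j).mul_const _
  rw [lintegral_pi_prod _ hfmeas n]
  have hdot2 : ∀ h : Fin p → ℝ, (h ⬝ᵥ w)^2/σ^2 = (σ^2)⁻¹ * ((0:ℝ) + ∑ j, h j * w j)^2 := by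
    intro h
    simp only [dotProduct]
    ring
  simp_rw [hdot2]
  rw [key_multi p w ((σ^2)⁻¹) 0 (by positivity) hcpos]
  rw [show ((σ^2)⁻¹ * (0:ℝ)^2/(1-2*(σ^2)⁻¹*S)) = 0 by ring, Real.exp_zero, mul_one]
  rw [ENNReal.toReal_pow, ENNReal.toReal_ofReal (by positivity)]
  -- final rpow algebra
  have hbase : (1:ℝ) - 2 * (∑ i, (A.mulVec (β' - βstar)) i ^ 2) / σ ^ 2 = 1 - 2*(σ^2)⁻¹*S := by
    rw [hS, hw, hδ]; ring
  rw [hbase]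
  rw [show (√(1-2*(σ^2)⁻¹*S))⁻¹ = (1-2*(σ^2)⁻¹*S) ^ (-(1/2) : ℝ) by
    rw [Real.rpow_neg hcpos.le, ← Real.sqrt_eq_rpow]]
  rw [← Real.rpow_natCast ((1-2*(σ^2)⁻¹*S) ^ (-(1/2) : ℝ)) n, ← Real.rpow_mul hcpos.le]
  congr 1
  push_cast
  ring
end

section
/- Let Σ̂ be a p×p positive semidefinite matrix, e_j a standard basis vector, T a closed convex cone in ℝ^p, λ > 0, and ρ > 0. Suppose η̂ minimizes ‖Σ̂^{1/2} η‖ subject to sup_{u ∈ (T ∪ −T) ∩ S^{p-1}} |(η^T Σ̂ − e_j^T) u| ≤ ρλ. Then for any u ∈ T ∩ S^{p-1} with u_j ≥ ρλ, we have ‖Σ̂^{1/2} η̂‖² ≥ (u_j − ρλ)² / (u^T Σ̂ u). -/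
open Matrix

theorem stmt_18 {p : ℕ} (Sig A : Matrix (Fin p) (Fin p) ℝ)
    (hSig : Sig.PosSemidef) (hA : A.PosSemidef) (hA2 : A * A = Sig)
    (j : Fin p) (T : Set (Fin p → ℝ)) (hTconv : Convex ℝ T) (hTclosed : IsClosed T)
    (hTcone : ∀ (c : ℝ), 0 ≤ c → ∀ x ∈ T, c • x ∈ T)
    (lam ρ : ℝ) (hlam : 0 < lam) (hρ : 0 < ρ)
    (feasible : (Fin p → ℝ) → Prop)
    (hfeasible : ∀ η, feasible η ↔ ∀ u ∈ (T ∪ -T) ∩ {x | ∑ i, (x i) ^ 2 = 1},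
        |Sig.mulVec η ⬝ᵥ u - u j| ≤ ρ * lam)
    (ηhat : Fin p → ℝ) (hηfeas : feasible ηhat)
    (hηmin : ∀ η, feasible η →
      Real.sqrt (∑ i, (A.mulVec ηhat i) ^ 2) ≤ Real.sqrt (∑ i, (A.mulVec η i) ^ 2)) :
    ∀ u ∈ T ∩ {x | ∑ i, (x i) ^ 2 = 1}, ρ * lam ≤ u j →
      (u j - ρ * lam) ^ 2 / (u ⬝ᵥ Sig.mulVec u) ≤ ∑ i, (A.mulVec ηhat i) ^ 2 := by
  intro u hu hju
  obtain ⟨huT, huS⟩ := hu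
  have hfe := (hfeasible ηhat).mp hηfeas u ⟨Or.inl huT, huS⟩
  have hsymm : ∀ x y : Fin p → ℝ, A.mulVec x ⬝ᵥ y = x ⬝ᵥ A.mulVec y := by
    intro x y
    have ht : Aᵀ = A := (by simpa using hA.1 : A.IsSymm)
    rw [Matrix.dotProduct_mulVec, ← Matrix.mulVec_transpose, ht]
  set v := A.mulVec ηhat with hv
  set w := A.mulVec u with hw
  have key1 : Sig.mulVec ηhat ⬝ᵥ u = ∑ i, v i * w i := by
    rw [← hA2, ← Matrix.mulVec_mulVec, hsymm]
    rfl
  have key2 : u ⬝ᵥ Sig.mulVec u = ∑ i, w i ^ 2 := by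
    rw [← hA2, ← Matrix.mulVec_mulVec, dotProduct_comm, hsymm]
    simp [dotProduct, sq, hw]
  have hlow : u j - ρ * lam ≤ ∑ i, v i * w i := by
    rw [key1] at hfe
    have := abs_le.mp hfe
    linarith [this.1]
  have hnum0 : 0 ≤ u j - ρ * lam := by linarith
  have hCS : (∑ i, v i * w i) ^ 2 ≤ (∑ i, v i ^ 2) * (∑ i, w i ^ 2) :=
    Finset.sum_mul_sq_le_sq_mul_sq _ _ _
  have hkey : (u j - ρ * lam) ^ 2 ≤ (∑ i, v i ^ 2) * (∑ i, w i ^ 2) :=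
    le_trans (by nlinarith) hCS
  rw [key2]
  rcases eq_or_lt_of_le (Finset.sum_nonneg fun i _ => sq_nonneg (w i)) with h0 | hpos
  · rw [← h0, div_zero]
    exact Finset.sum_nonneg fun i _ => sq_nonneg (v i)
  · rw [div_le_iff₀ hpos]
    linarith
end

section
/- Let M^p = {β ∈ ℝ^p : β_1 ≤ ... ≤ β_p} be the monotone cone. Any β ∈ M^p can be approximated by a vector v with at most k constant pieces (v ∈ M_k^p) such that ‖β − v‖ ≤ √p · (β_p − β_1)/(2k). -/
theorem stmt_19 {p : ℕ} (hp : 0 < p) (β : Fin p → ℝ) (hβ : Monotone β)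
    (k : ℕ) (hk : 0 < k) :
    ∃ v : Fin p → ℝ, Monotone v ∧ (Set.range v).ncard ≤ k ∧
      Real.sqrt (∑ i, (β i - v i) ^ 2) ≤
        Real.sqrt p * (β ⟨p - 1, by omega⟩ - β ⟨0, hp⟩) / (2 * k) := by
  set a := β ⟨0, hp⟩ with ha
  set b := β ⟨p - 1, by omega⟩ with hb
  have hlow : ∀ i, a ≤ β i := fun i => hβ (by simp [Fin.le_def])
  have hhigh : ∀ i, β i ≤ b := fun i => hβ (by have := i.isLt; simp [Fin.le_def]; omega)
  rcases le_or_gt b a with hcle | hc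
  · refine ⟨β, hβ, ?_, ?_⟩
    · have hconst : ∀ i, β i = a := fun i => le_antisymm ((hhigh i).trans hcle) (hlow i)
      have hr : Set.range β = {a} := by
        ext x
        simp only [Set.mem_range, Set.mem_singleton_iff]
        constructor
        · rintro ⟨i, rfl⟩; exact hconst i
        · rintro rfl; exact ⟨⟨0, hp⟩, rfl⟩
      rw [hr]
      simpa using Nat.one_le_iff_ne_zero.mpr hk.ne'
    · have hba : b = a := le_antisymm hcle (hlow _)
      simp [hba]
  · set c := b - a with hcdef
    have hc0 : 0 < c := sub_pos.mpr hc
    have hk0 : (0:ℝ) < k := Nat.cast_pos.mpr hk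
    set q : Fin p → ℝ := fun i => (β i - a) * k / c with hq
    have hq0 : ∀ i, 0 ≤ q i := fun i =>
      div_nonneg (mul_nonneg (sub_nonneg.mpr (hlow i)) hk0.le) hc0.le
    set m : Fin p → ℕ := fun i => min ⌊q i⌋₊ (k - 1) with hm
    have hmk : ∀ i, m i < k := fun i => by
      have : m i ≤ k - 1 := min_le_right _ _
      omega
    set v : Fin p → ℝ := fun i => a + c / k * (m i + 1/2) with hv
    have hdk : 0 < c / k := div_pos hc0 hk0
    have hlowv : ∀ i, a + c / k * m i ≤ β i := by
      intro i
      have h1 : (m i : ℝ) ≤ q i := by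
        refine le_trans ?_ (Nat.floor_le (hq0 i))
        exact_mod_cast min_le_left _ _
      have h2 := mul_le_mul_of_nonneg_left h1 hdk.le
      have heq : a + c / k * q i = β i := by
        rw [hq]; field_simp; ring
      linarith
    have huppv : ∀ i, β i ≤ a + c / k * (m i + 1) := by
      intro i
      rcases le_or_gt ⌊q i⌋₊ (k - 1) with h | h
      · have hmi : m i = ⌊q i⌋₊ := min_eq_left h
        have h2 : q i < (m i : ℝ) + 1 := by
          rw [hmi]; exact_mod_cast Nat.lt_floor_add_one (q i)
        have h3 := mul_le_mul_of_nonneg_left h2.le hdk.le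
        have heq : a + c / k * q i = β i := by
          rw [hq]; field_simp; ring
        linarith
      · have hmi : m i = k - 1 := min_eq_right h.le
        have h3 : ((m i : ℝ) + 1) = k := by
          rw [hmi]; exact_mod_cast Nat.succ_pred_eq_of_pos hk
        have h4 : a + c / k * ((m i : ℝ) + 1) = b := by
          rw [h3, hcdef]; field_simp; ring
        rw [h4]; exact hhigh i
    have hbound : ∀ i, (β i - v i) ^ 2 ≤ (c / (2 * k)) ^ 2 := by
      intro i
      have h1 := hlowv i
      have h2 := huppv i
      have e1 : v i = a + c / k * m i + c / (2 * k) := by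
        rw [hv]; field_simp; ring
      have e2 : a + c / k * ((m i : ℝ) + 1) = a + c / k * m i + 2 * (c / (2 * k)) := by
        field_simp; ring
      have h4 : -(c / (2 * k)) ≤ β i - v i := by linarith
      have h5 : β i - v i ≤ c / (2 * k) := by linarith
      exact sq_le_sq' h4 h5
    have hmono : Monotone v := by
      intro i j hij
      have hβij : β i ≤ β j := hβ hij
      have hqm : q i ≤ q j := by
        rw [hq]
        apply div_le_div_of_nonneg_right ?_ hc0.le
        · exact mul_le_mul_of_nonneg_right (by linarith) hk0.le
      have hmm : m i ≤ m j := min_le_min (Nat.floor_mono hqm) le_rfl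
      have hmm' : (m i : ℝ) ≤ m j := Nat.cast_le.mpr hmm
      simp only [hv]
      have := mul_le_mul_of_nonneg_left (by linarith : (m i:ℝ) + 1/2 ≤ (m j:ℝ) + 1/2) hdk.le
      linarith
    have hrange : (Set.range v).ncard ≤ k := by
      have hsub : Set.range v ⊆ (fun n : ℕ => a + c / k * (n + 1/2)) '' ↑(Finset.range k) := by
        rintro x ⟨i, rfl⟩
        exact ⟨m i, by simpa using hmk i, rfl⟩
      calc (Set.range v).ncard
          ≤ ((fun n : ℕ => a + c / k * (n + 1/2)) '' ↑(Finset.range k)).ncard :=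
            Set.ncard_le_ncard hsub (((Finset.range k).finite_toSet).image _)
        _ ≤ (↑(Finset.range k) : Set ℕ).ncard :=
            Set.ncard_image_le (Finset.range k).finite_toSet
        _ = k := by rw [Set.ncard_coe_finset, Finset.card_range]
    refine ⟨v, hmono, hrange, ?_⟩
    have hsum : ∑ i, (β i - v i) ^ 2 ≤ (p : ℝ) * (c / (2 * k)) ^ 2 := by
      calc ∑ i, (β i - v i) ^ 2 ≤ ∑ _i : Fin p, (c / (2 * k)) ^ 2 :=
            Finset.sum_le_sum (fun i _ => hbound i)
        _ = (p : ℝ) * (c / (2 * k)) ^ 2 := by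
            simp [Finset.sum_const, Finset.card_univ]
    calc Real.sqrt (∑ i, (β i - v i) ^ 2)
        ≤ Real.sqrt ((p : ℝ) * (c / (2 * k)) ^ 2) := Real.sqrt_le_sqrt hsum
      _ = Real.sqrt p * (c / (2 * k)) := by
          rw [Real.sqrt_mul (Nat.cast_nonneg p),
            Real.sqrt_sq (by positivity : (0:ℝ) ≤ c / (2 * k))]
      _ = Real.sqrt p * c / (2 * k) := by ring
end
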